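/- arXiv:0911.3374 — 6 statements merged into one kernel-verified Lean document; each statement's English description precedes it below -/
import Mathlib

section
/- Let f : ℤ → ℝ be a function and let a ∈ ℤ. Let μ > 0 be non-integer with m − 1 < μ < m, where m = ⌈μ⌉. Then for all t ∈ ℤ with t ≥ a + m, the discrete backward fractional Taylor formula holds: f(t) = Σ_{k=0}^{m−1} ((t−a)^{↑k} / k!) · ∇^k f(a) + (1/Γ(μ)) · Σ_{τ=a+1}^{t} (t−τ+1)^{↑(μ−1)} · ∇_{(a+1)*}^{μ} f(τ). -/
open Finset

/-- Backward (nabla) difference: `∇f(t) = f(t) - f(t-1)`. -/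
def nabla (f : ℤ → ℝ) : ℤ → ℝ := fun t => f t - f (t - 1)

/-- Rising factorial `t^{↑α} = Γ(t+α)/Γ(t)`. -/
noncomputable def risingFac (t α : ℝ) : ℝ := Real.Gamma (t + α) / Real.Gamma t

/-- The `ν`-th order nabla fractional sum `∇_a^{-ν} f (t) = Σ_{s=a}^{t} (t-s+1)^{↑(ν-1)}/Γ(ν) · f(s)`. -/
noncomputable def fracSum (ν : ℝ) (a : ℤ) (f : ℤ → ℝ) : ℤ → ℝ := fun t =>
  ∑ s ∈ Finset.Icc a t, risingFac ((t - s + 1 : ℤ) : ℝ) (ν - 1) / Real.Gamma ν * f s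

/-- Caputo-like nabla fractional difference `∇_{a*}^{μ} f = ∇_a^{-(m-μ)} (∇^m f)`, `m = ⌈μ⌉`. -/
noncomputable def caputoNabla (μ : ℝ) (a : ℤ) (f : ℤ → ℝ) : ℤ → ℝ :=
  fracSum ((⌈μ⌉₊ : ℝ) - μ) a (nabla^[⌈μ⌉₊] f)

section Aux
open Polynomial Nat

noncomputable def P (n : ℕ) (x : ℝ) : ℝ := (ascPochhammer ℝ n).eval x
lemma P_succ (n : ℕ) (x : ℝ) : P (n+1) x = P n x * (x + n) := ascPochhammer_succ_eval n x
lemma P_succ_left (n : ℕ) (x : ℝ) : P (n+1) x = x * P n (x+1) := by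
  unfold P; rw [ascPochhammer_succ_left]; simp [eval_comp]
lemma P_shift (n : ℕ) (x : ℝ) : P (n+1) (x+1) = P (n+1) x + (n+1) * P n (x+1) := by
  rw [P_succ_left n x, P_succ n (x+1)]; ring
lemma fac_mul_P (r n : ℕ) : (r ! : ℝ) * P n ((r : ℝ) + 1) = (r + n)! :=
  factorial_mul_ascPochhammer ℝ r n

lemma gamma_add_nat (x : ℝ) (hx : 0 < x) (n : ℕ) :
    Real.Gamma (x + n) = P n x * Real.Gamma x := by
  induction n with
  | zero => simp [P]
  | succ n ih =>
    have h1 : x + (n+1:ℕ) = (x + n) + 1 := by push_cast; ring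
    have h2 : x + (n:ℝ) ≠ 0 := by positivity
    rw [h1, Real.Gamma_add_one h2, ih, P_succ]; ring

lemma vandermonde (x y : ℝ) : ∀ n : ℕ, P n (x + y) =
    ∑ j ∈ range (n+1), (n.choose j : ℝ) * (P j x * P (n-j) y)
  | 0 => by simp [P]
  | n+1 => by
    rw [P_succ, vandermonde x y n, sum_mul]
    have step : ∀ j ∈ range (n+1),
        (n.choose j : ℝ) * (P j x * P (n-j) y) * (x + y + n)
        = (n.choose j : ℝ) * (P (j+1) x * P (n-j) y)
          + (n.choose j : ℝ) * (P j x * P (n+1-j) y) := by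
      intro j hj
      have hj' : j ≤ n := by simpa using Nat.lt_succ_iff.mp (mem_range.mp hj)
      have h1 : P (j+1) x = P j x * (x + j) := P_succ j x
      have h2 : P (n+1-j) y = P (n-j) y * (y + (n-j : ℕ)) := by
        have : n + 1 - j = (n - j) + 1 := by omega
        rw [this]; exact P_succ (n-j) y
      rw [h1, h2]
      have hc : ((n - j : ℕ) : ℝ) = (n : ℝ) - j := by
        push_cast [Nat.cast_sub hj']; ring
      rw [hc]; ring
    rw [sum_congr rfl step, sum_add_distrib]
    have hS2 : ∑ j ∈ range (n+1), (n.choose j : ℝ) * (P j x * P (n+1-j) y)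
        = (∑ i ∈ range n, (n.choose (i+1) : ℝ) * (P (i+1) x * P (n-i) y)) + P (n+1) y := by
      rw [Finset.sum_range_succ' (fun j => (n.choose j : ℝ) * (P j x * P (n+1-j) y)) n]
      simp [P, Nat.succ_sub_succ]
    have hdrop : ∑ i ∈ range (n+1), (n.choose (i+1) : ℝ) * (P (i+1) x * P (n-i) y)
        = ∑ i ∈ range n, (n.choose (i+1) : ℝ) * (P (i+1) x * P (n-i) y) := by
      rw [Finset.sum_range_succ]
      simp [Nat.choose_succ_self]
    have hRHS : ∑ j ∈ range (n+1+1), ((n+1).choose j : ℝ) * (P j x * P (n+1-j) y)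
        = (∑ i ∈ range (n+1), (n.choose i : ℝ) * (P (i+1) x * P (n-i) y))
          + ∑ j ∈ range (n+1), (n.choose j : ℝ) * (P j x * P (n+1-j) y) := by
      rw [Finset.sum_range_succ' (fun j => ((n+1).choose j : ℝ) * (P j x * P (n+1-j) y)) (n+1)]
      have : ∀ i ∈ range (n+1), ((n+1).choose (i+1) : ℝ) * (P (i+1) x * P (n+1-(i+1)) y)
          = (n.choose i : ℝ) * (P (i+1) x * P (n-i) y)
            + (n.choose (i+1) : ℝ) * (P (i+1) x * P (n-i) y) := by
        intro i _
        have : n + 1 - (i+1) = n - i := by omega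
        rw [this, Nat.choose_succ_succ]
        push_cast; ring
      rw [sum_congr rfl this, sum_add_distrib, hS2, hdrop]
      simp [P]
      ring
    rw [hRHS]


lemma P_symm (m N : ℕ) : P m ((N : ℝ)+1) / m ! = P N ((m : ℝ)+1) / N ! := by
  have h1 := fac_mul_P N m
  have h2 := fac_mul_P m N
  have h3 : (N + m)! = (m + N)! := by rw [Nat.add_comm]
  have hN : (N ! : ℝ) ≠ 0 := Nat.cast_ne_zero.mpr (Nat.factorial_ne_zero N)
  have hM : (m ! : ℝ) ≠ 0 := Nat.cast_ne_zero.mpr (Nat.factorial_ne_zero m)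
  field_simp
  rw [mul_comm (P m _) _, h1, h2, h3]

lemma hockey (m : ℕ) : ∀ N : ℕ, ∑ j ∈ range N, P j ((m:ℝ)+1) / j ! = P (m+1) N / (m+1)!
  | 0 => by simp [P, ascPochhammer_eval_zero]
  | N+1 => by
    rw [Finset.sum_range_succ, hockey m N]
    have hc : ((N+1 : ℕ) : ℝ) = (N : ℝ) + 1 := by push_cast; ring
    rw [hc, P_shift m (N:ℝ), _root_.add_div]
    congr 1
    have hfac : (((m+1))! : ℝ) = ((m:ℝ)+1) * m ! := by
      rw [Nat.factorial_succ]; push_cast; ring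
    have hm1 : ((m:ℝ)+1) ≠ 0 := by positivity
    rw [hfac, mul_div_mul_left _ _ hm1, P_symm m N]

lemma conv_coeff (x y : ℝ) (k : ℕ) :
    ∑ j ∈ range (k+1), (P j x / j !) * (P (k-j) y / (k-j)!) = P k (x+y) / k ! := by
  rw [vandermonde x y k, sum_div]
  refine sum_congr rfl fun j hj => ?_
  have hj' : j ≤ k := Nat.lt_succ_iff.mp (mem_range.mp hj)
  rw [Nat.cast_choose ℝ hj']
  have h1 : (j ! : ℝ) ≠ 0 := Nat.cast_ne_zero.mpr (Nat.factorial_ne_zero j)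
  have h2 : ((k-j)! : ℝ) ≠ 0 := Nat.cast_ne_zero.mpr (Nat.factorial_ne_zero (k-j))
  have h3 : (k ! : ℝ) ≠ 0 := Nat.cast_ne_zero.mpr (Nat.factorial_ne_zero k)
  field_simp


lemma sum_Icc_int (a t : ℤ) (F : ℤ → ℝ) :
    ∑ s ∈ Finset.Icc (a+1) t, F s = ∑ j ∈ range (t - a).toNat, F (t - j) := by
  refine Finset.sum_nbij' (fun s => (t - s).toNat) (fun j => t - (j : ℤ)) ?_ ?_ ?_ ?_ ?_
  · intro s hs
    simp only [Finset.mem_Icc] at hs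
    simp only [Finset.mem_range]
    omega
  · intro j hj
    simp only [Finset.mem_range] at hj
    simp only [Finset.mem_Icc]
    omega
  · intro s hs
    simp only [Finset.mem_Icc] at hs
    omega
  · intro j hj
    simp only [Finset.mem_range] at hj
    omega
  · intro s hs
    simp only [Finset.mem_Icc] at hs
    congr 1
    omega

lemma conv_swap (N : ℕ) (A B g : ℕ → ℝ) :
    ∑ j ∈ range N, A j * ∑ i ∈ range (N - j), B i * g (j + i)
    = ∑ k ∈ range N, (∑ j ∈ range (k+1), A j * B (k - j)) * g k := by
  simp only [Finset.mul_sum, Finset.sum_mul]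
  rw [Finset.sum_sigma', Finset.sum_sigma']
  refine Finset.sum_nbij' (fun p => (⟨p.1 + p.2, p.1⟩ : (k : ℕ) × ℕ)) (fun p => ⟨p.2, p.1 - p.2⟩) ?_ ?_ ?_ ?_ ?_
  · rintro ⟨j, i⟩ hp
    simp only [Finset.mem_sigma, Finset.mem_range] at hp ⊢
    omega
  · rintro ⟨k, j⟩ hp
    simp only [Finset.mem_sigma, Finset.mem_range] at hp ⊢
    omega
  · rintro ⟨j, i⟩ hp
    simp only [Finset.mem_sigma, Finset.mem_range] at hp
    dsimp only
    congr 1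
    omega
  · rintro ⟨k, j⟩ hp
    simp only [Finset.mem_sigma, Finset.mem_range] at hp
    dsimp only
    congr 1
    omega
  · rintro ⟨j, i⟩ hp
    simp only [Finset.mem_sigma, Finset.mem_range] at hp
    have : j + i - j = i := by omega
    rw [this]; ring

lemma telescope (g : ℤ → ℝ) (t : ℤ) (K : ℕ) :
    ∑ i ∈ range K, nabla g (t - i) = g t - g (t - K) := by
  have h : ∀ i : ℕ, nabla g (t - i) = g (t - i) - g (t - (i+1 : ℕ)) := by
    intro i
    have : t - (i:ℤ) - 1 = t - ((i+1 : ℕ) : ℤ) := by push_cast; ring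
    simp only [nabla, this]
  simp only [h]
  have := Finset.sum_range_sub' (fun i : ℕ => g (t - i)) K
  simpa using this

lemma taylor_int (f : ℤ → ℝ) (a : ℤ) :
    ∀ m : ℕ, ∀ t : ℤ, a ≤ t → f t =
      (∑ k ∈ range (m+1), P k ((t - a : ℤ) : ℝ) / k ! * nabla^[k] f a)
      + ∑ j ∈ range (t - a).toNat, P j ((m:ℝ)+1) / j ! * nabla^[m+1] f (t - j) := by
  intro m
  induction m with
  | zero =>
    intro t hat
    have hN : ((t - a).toNat : ℤ) = t - a := Int.toNat_of_nonneg (by omega)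
    have h1 : ∀ j : ℕ, P j (((0:ℕ):ℝ)+1) / j ! = 1 := by
      intro j
      have : P j (((0:ℕ):ℝ)+1) = (j ! : ℝ) := by
        norm_num
        simpa [P] using ascPochhammer_eval_one ℝ j
      rw [this]
      exact div_self (Nat.cast_ne_zero.mpr (Nat.factorial_ne_zero j))
    simp only [h1, one_mul]
    have h2 : ∑ j ∈ range (t - a).toNat, nabla^[0+1] f (t - j) = f t - f a := by
      have := telescope f t (t - a).toNat
      rw [hN] at this
      simpa using this
    rw [h2]
    simp [P, Finset.sum_range_one]
  | succ m ih =>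
    intro t hat
    have hN : (((t - a).toNat : ℕ) : ℤ) = t - a := Int.toNat_of_nonneg (by omega)
    set N := (t - a).toNat with hNdef
    have hNR : ((t - a : ℤ) : ℝ) = (N : ℝ) := by exact_mod_cast congrArg Int.cast hN.symm
    have split : ∀ j ∈ range N, P j ((m:ℝ)+1) / j ! * nabla^[m+1] f (t - j)
        = P j ((m:ℝ)+1) / j ! * nabla^[m+1] f a
          + P j ((m:ℝ)+1) / j ! *
              ∑ i ∈ range (N - j), (1:ℝ) * nabla (nabla^[m+1] f) (t - (j+i : ℕ)) := by
      intro j hj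
      have hjN : j < N := mem_range.mp hj
      have htel := telescope (nabla^[m+1] f) (t - j) (N - j)
      have harg : ∀ i : ℕ, t - (j:ℤ) - (i:ℤ) = t - ((j+i : ℕ) : ℤ) := by
        intro i; push_cast; ring
      simp only [harg] at htel
      have hNj : j + (N - j) = N := by omega
      rw [hNj] at htel
      have hta : t - (N:ℤ) = a := by omega
      rw [hta] at htel
      have : nabla^[m+1] f (t - j)
          = nabla^[m+1] f a + ∑ i ∈ range (N - j), nabla (nabla^[m+1] f) (t - (j+i : ℕ)) := by
        rw [htel]; ring
      rw [this]
      simp only [one_mul]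
      ring
    have H := ih t hat
    rw [Finset.sum_congr rfl split, Finset.sum_add_distrib] at H
    have term1 : ∑ j ∈ range N, P j ((m:ℝ)+1) / j ! * nabla^[m+1] f a
        = P (m+1) ((t - a : ℤ) : ℝ) / (m+1)! * nabla^[m+1] f a := by
      rw [← Finset.sum_mul, hockey m N, hNR]
    have term2 : ∑ j ∈ range N,
          P j ((m:ℝ)+1) / j ! * ∑ i ∈ range (N - j), (1:ℝ) * nabla (nabla^[m+1] f) (t - (j+i : ℕ))
        = ∑ k ∈ range N, P k (((m+1:ℕ):ℝ)+1) / k ! * nabla^[m+1+1] f (t - k) := by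
      have hswap := conv_swap N (fun j => P j ((m:ℝ)+1) / j !) (fun _ => (1:ℝ))
        (fun k => nabla (nabla^[m+1] f) (t - (k:ℕ)))
      rw [hswap]
      refine Finset.sum_congr rfl fun k _ => ?_
      have hin : ∑ j ∈ range (k+1), P j ((m:ℝ)+1) / j ! * (1:ℝ)
          = P k (((m+1:ℕ):ℝ)+1) / k ! := by
        simp only [mul_one]
        rw [hockey m (k+1)]
        have hc : ((k+1:ℕ):ℝ) = (k:ℝ)+1 := by push_cast; ring
        rw [hc]
        have := P_symm (m+1) k
        simpa using this
      rw [hin]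
      congr 1
      exact (Function.iterate_succ_apply' nabla (m+1) f).symm ▸ rfl
    rw [term1, term2] at H
    rw [H]
    conv_rhs => rw [Finset.sum_range_succ]
    ring

lemma risingFac_pos_nat (x : ℝ) (hx : 0 < x) (k : ℕ) : risingFac x k = P k x := by
  unfold risingFac
  rw [gamma_add_nat x hx k]
  exact mul_div_cancel_right₀ _ (Real.Gamma_pos_of_pos hx).ne'

lemma risingFac_coeff (ν : ℝ) (hν : 0 < ν) (n : ℕ) :
    risingFac ((n:ℝ)+1) (ν - 1) = P n ν * Real.Gamma ν / n ! := by
  unfold risingFac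
  have h1 : (n:ℝ)+1 + (ν-1) = ν + n := by ring
  rw [h1, gamma_add_nat ν hν n, Real.Gamma_nat_eq_factorial n]

end Aux

section Main
open Polynomial Nat

/-- Discrete backward fractional Taylor formula. -/
theorem discrete_nabla_fractional_taylor
    (f : ℤ → ℝ) (a : ℤ) (μ : ℝ) (hμ : 0 < μ) (hμint : ∀ n : ℤ, μ ≠ n)
    (m : ℕ) (hm : m = ⌈μ⌉₊) (hm1 : (m : ℝ) - 1 < μ) (hm2 : μ < m)
    (t : ℤ) (ht : a + m ≤ t) :
    f t = (∑ k ∈ Finset.range m,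
        risingFac ((t - a : ℤ) : ℝ) k / (Nat.factorial k) * nabla^[k] f a) +
      (1 / Real.Gamma μ) * ∑ τ ∈ Finset.Icc (a + 1) t,
        risingFac ((t - τ + 1 : ℤ) : ℝ) (μ - 1) * caputoNabla μ (a + 1) f τ := by
  have hm0 : 1 ≤ m := by
    rcases Nat.eq_zero_or_pos m with h | h
    · exfalso; rw [h] at hm2; norm_num at hm2; linarith
    · exact h
  have hmμ : 0 < (m:ℝ) - μ := by linarith
  have hat : a ≤ t := by omega
  have hta : 0 < t - a := by omega
  set N := (t - a).toNat with hNdef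
  have hN : ((N : ℕ) : ℤ) = t - a := Int.toNat_of_nonneg (by omega)
  have hΓμ : Real.Gamma μ ≠ 0 := (Real.Gamma_pos_of_pos hμ).ne'
  have hΓν : Real.Gamma ((m:ℝ) - μ) ≠ 0 := (Real.Gamma_pos_of_pos hmμ).ne'
  have hcap : ∀ τ : ℤ, caputoNabla μ (a+1) f τ =
      ∑ s ∈ Finset.Icc (a+1) τ,
        risingFac ((τ - s + 1 : ℤ) : ℝ) (((m:ℝ) - μ) - 1) / Real.Gamma ((m:ℝ) - μ)
          * nabla^[m] f s := by
    intro τ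
    rw [caputoNabla, ← hm, fracSum]
  -- Transform the remainder into Pochhammer form
  have hrem : ∑ τ ∈ Finset.Icc (a+1) t,
        risingFac ((t - τ + 1 : ℤ) : ℝ) (μ - 1) * caputoNabla μ (a+1) f τ
      = Real.Gamma μ * ∑ k ∈ range N, P k (m:ℝ) / k ! * nabla^[m] f (t - k) := by
    rw [sum_Icc_int a t]
    have hterm : ∀ j ∈ range N,
        risingFac ((t - (t - (j:ℤ)) + 1 : ℤ) : ℝ) (μ - 1) * caputoNabla μ (a+1) f (t - (j:ℤ))
        = Real.Gamma μ * ((P j μ / j !) *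
            ∑ i ∈ range (N - j), (P i ((m:ℝ) - μ) / i !) * nabla^[m] f (t - ((j+i : ℕ) : ℤ))) := by
      intro j hj
      have hjN : j < N := mem_range.mp hj
      have h1 : ((t - (t - (j:ℤ)) + 1 : ℤ) : ℝ) = (j:ℝ) + 1 := by push_cast; ring
      rw [h1, risingFac_coeff μ hμ j, hcap (t - (j:ℤ)), sum_Icc_int a (t - (j:ℤ))]
      have h2 : (t - (j:ℤ) - a).toNat = N - j := by omega
      rw [h2]
      have hin : ∀ i ∈ range (N - j),
          risingFac ((t - (j:ℤ) - (t - (j:ℤ) - (i:ℤ)) + 1 : ℤ) : ℝ) (((m:ℝ) - μ) - 1)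
              / Real.Gamma ((m:ℝ) - μ) * nabla^[m] f (t - (j:ℤ) - (i:ℤ))
          = (P i ((m:ℝ) - μ) / i !) * nabla^[m] f (t - ((j+i : ℕ) : ℤ)) := by
        intro i _
        have h3 : ((t - (j:ℤ) - (t - (j:ℤ) - (i:ℤ)) + 1 : ℤ) : ℝ) = (i:ℝ) + 1 := by
          push_cast; ring
        have h4 : t - (j:ℤ) - (i:ℤ) = t - ((j+i : ℕ) : ℤ) := by push_cast; ring
        rw [h3, risingFac_coeff ((m:ℝ) - μ) hmμ i, h4]
        field_simp
      rw [Finset.sum_congr rfl hin]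
      field_simp
    rw [Finset.sum_congr rfl hterm, ← Finset.mul_sum]
    congr 1
    have hswap := conv_swap N (fun j => P j μ / j !) (fun i => P i ((m:ℝ) - μ) / i !)
      (fun k => nabla^[m] f (t - (k : ℤ)))
    rw [hswap]
    refine Finset.sum_congr rfl fun k _ => ?_
    congr 1
    rw [conv_coeff μ ((m:ℝ) - μ) k]
    have : μ + ((m:ℝ) - μ) = (m:ℝ) := by ring
    rw [this]
  -- Integer-order Taylor formula
  have htay := taylor_int f a (m - 1) t hat
  have hm1' : m - 1 + 1 = m := by omega
  have hmc : ((m - 1 : ℕ) : ℝ) + 1 = (m : ℝ) := by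
    push_cast [Nat.cast_sub hm0]; ring
  rw [hm1', hmc] at htay
  -- Polynomial part conversion
  have hpoly : ∀ k ∈ range m, risingFac ((t - a : ℤ) : ℝ) k / (k ! : ℝ) * nabla^[k] f a
      = P k ((t - a : ℤ) : ℝ) / k ! * nabla^[k] f a := by
    intro k _
    have hx : (0:ℝ) < ((t - a : ℤ) : ℝ) := by exact_mod_cast hta
    rw [risingFac_pos_nat _ hx k]
  rw [Finset.sum_congr rfl hpoly, hrem]
  rw [← mul_assoc, one_div, inv_mul_cancel₀ hΓμ, one_mul]
  exact htay

end Main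
end

section
/- Let f : ℤ → ℝ be a function and let a ∈ ℤ. Let μ > 0 be non-integer with m − 1 < μ < m, where m = ⌈μ⌉. Assume additionally that ∇^k f(a) = 0 for k = 0, 1, ..., m−1. Then for all t ∈ ℤ with t ≥ a + m: f(t) = (1/Γ(μ)) · Σ_{τ=a+1}^{t} (t−τ+1)^{↑(μ−1)} · ∇_{(a+1)*}^{μ} f(τ). -/
open Finset

lemma asc_vandermonde (x y : ℝ) (n : ℕ) :
    (ascPochhammer ℝ n).eval (x + y) = ∑ ij ∈ Finset.HasAntidiagonal.antidiagonal n,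
      (n.choose ij.1 : ℝ) * ((ascPochhammer ℝ ij.1).eval x *
        (ascPochhammer ℝ ij.2).eval y) := by
  induction n with
  | zero => simp
  | succ n ih =>
    rw [ascPochhammer_succ_eval, ih,
      Finset.sum_antidiagonal_choose_succ_mul
        (fun i j => (ascPochhammer ℝ i).eval x * (ascPochhammer ℝ j).eval y) n,
      Finset.sum_mul, ← Finset.sum_add_distrib]
    refine Finset.sum_congr rfl fun ij hij => ?_
    have hsum : ij.1 + ij.2 = n := Finset.HasAntidiagonal.mem_antidiagonal.mp hij
    have hc : (n.choose ij.2 : ℝ) = (n.choose ij.1 : ℝ) := by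
      rw [Nat.choose_symm_of_eq_add hsum.symm]
    have hn : (ij.1 : ℝ) + (ij.2 : ℝ) = (n : ℝ) := by exact_mod_cast hsum
    rw [ascPochhammer_succ_eval, ascPochhammer_succ_eval, hc]
    linear_combination (-(1:ℝ) * (n.choose ij.1 : ℝ) * (ascPochhammer ℝ ij.1).eval x *
      (ascPochhammer ℝ ij.2).eval y) * hn

lemma Gamma_add_nat (x : ℝ) (hx : 0 < x) (n : ℕ) :
    Real.Gamma (x + n) = Real.Gamma x * (ascPochhammer ℝ n).eval x := by
  induction n with
  | zero => simp
  | succ n ih =>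
    have h : (x + (n + 1 : ℕ) : ℝ) = (x + n) + 1 := by push_cast; ring
    have hne : (x + n : ℝ) ≠ 0 := by positivity
    rw [h, Real.Gamma_add_one hne, ih, ascPochhammer_succ_eval]
    ring

lemma risingFac_natCast (ν : ℝ) (hν : 0 < ν) (n : ℕ) :
    risingFac ((n : ℝ) + 1) (ν - 1) =
      Real.Gamma ν * (ascPochhammer ℝ n).eval ν / n.factorial := by
  unfold risingFac
  have h1 : (n : ℝ) + 1 + (ν - 1) = ν + n := by ring
  rw [h1, Gamma_add_nat ν hν n, Real.Gamma_nat_eq_factorial]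

lemma kernel_nat (ν μ : ℝ) (hν : 0 < ν) (hμ : 0 < μ) (n : ℕ) :
    ∑ k ∈ Finset.range (n + 1),
        risingFac ((n : ℝ) - k + 1) (ν - 1) * risingFac ((k : ℝ) + 1) (μ - 1)
      = Real.Gamma ν * Real.Gamma μ / Real.Gamma (ν + μ) *
          risingFac ((n : ℝ) + 1) (ν + μ - 1) := by
  have hΓ : Real.Gamma (ν + μ) ≠ 0 := (Real.Gamma_pos_of_pos (by linarith)).ne'
  rw [risingFac_natCast (ν + μ) (by linarith) n]
  have hV := asc_vandermonde μ ν n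
  rw [Finset.Nat.sum_antidiagonal_eq_sum_range_succ_mk] at hV
  have hc : ν + μ = μ + ν := by ring
  rw [hc, hV, Finset.mul_sum, Finset.sum_div, Finset.mul_sum]
  refine Finset.sum_congr rfl fun k hk => ?_
  have hkn : k ≤ n := Nat.lt_succ_iff.mp (Finset.mem_range.mp hk)
  have hcast : (n : ℝ) - k = ((n - k : ℕ) : ℝ) := by
    rw [Nat.cast_sub hkn]
  rw [hcast, risingFac_natCast ν hν (n - k), risingFac_natCast μ hμ k]
  have hfact : ((n.choose k : ℕ) : ℝ) * k.factorial * (n - k).factorial = n.factorial := by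
    exact_mod_cast Nat.choose_mul_factorial_mul_factorial hkn
  have h1 : (k.factorial : ℝ) ≠ 0 := Nat.cast_ne_zero.2 k.factorial_ne_zero
  have h2 : ((n - k).factorial : ℝ) ≠ 0 := Nat.cast_ne_zero.2 (n - k).factorial_ne_zero
  have h3 : (n.factorial : ℝ) ≠ 0 := Nat.cast_ne_zero.2 n.factorial_ne_zero
  field_simp
  linear_combination (-1 * (ascPochhammer ℝ k).eval μ *
    (ascPochhammer ℝ (n - k)).eval ν) * hfact

lemma Icc_succ_int (a t : ℤ) (h : a ≤ t + 1) :
    Finset.Icc a (t + 1) = insert (t + 1) (Finset.Icc a t) := by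
  ext s; simp only [Finset.mem_Icc, Finset.mem_insert]; omega

lemma sum_Icc_eq_range (F : ℤ → ℝ) (τ t : ℤ) (h : τ ≤ t) :
    ∑ s ∈ Finset.Icc τ t, F s = ∑ k ∈ Finset.range ((t - τ).toNat + 1), F (τ + k) := by
  obtain ⟨n, rfl⟩ : ∃ n : ℕ, t = τ + n := ⟨(t - τ).toNat, by omega⟩
  have hn : (τ + n - τ).toNat = n := by omega
  rw [hn]
  clear h hn
  induction n with
  | zero => simp
  | succ n ih =>
    have e : τ + ((n + 1 : ℕ) : ℤ) = (τ + n) + 1 := by push_cast; ring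
    rw [e, Icc_succ_int τ (τ + n) (by omega),
      Finset.sum_insert (by simp only [Finset.mem_Icc]; omega), ih,
      Finset.sum_range_succ (fun k : ℕ => F (τ + k)) (n + 1),
      show ((n + 1 : ℕ) : ℤ) = (n : ℤ) + 1 from by push_cast; ring]
    ring

lemma risingFac_nonpos (x : ℤ) (hx : x ≤ 0) (α : ℝ) : risingFac (x : ℝ) α = 0 := by
  have h1 : ((x : ℤ) : ℝ) = -(((-x).toNat : ℕ) : ℝ) := by
    have : (((-x).toNat : ℕ) : ℤ) = -x := Int.toNat_of_nonneg (by omega)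
    exact_mod_cast (by omega : x = -(((-x).toNat : ℕ) : ℤ))
  unfold risingFac
  rw [h1, Real.Gamma_neg_nat_eq_zero, div_zero]

lemma kernelZ (ν μ : ℝ) (hν : 0 < ν) (hμ : 0 < μ) (τ t : ℤ) :
    ∑ s ∈ Finset.Icc τ t,
        risingFac ((t - s + 1 : ℤ) : ℝ) (ν - 1) * risingFac ((s - τ + 1 : ℤ) : ℝ) (μ - 1)
      = Real.Gamma ν * Real.Gamma μ / Real.Gamma (ν + μ) *
          risingFac ((t - τ + 1 : ℤ) : ℝ) (ν + μ - 1) := by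
  rcases le_or_gt τ t with h | h
  · rw [sum_Icc_eq_range _ τ t h]
    have hn : (((t - τ).toNat : ℕ) : ℝ) = (t : ℝ) - τ := by
      exact_mod_cast Int.toNat_of_nonneg (by omega : (0:ℤ) ≤ t - τ)
    have e0 : ((t - τ + 1 : ℤ) : ℝ) = (((t - τ).toNat : ℕ) : ℝ) + 1 := by push_cast [hn]; ring
    rw [e0, ← kernel_nat ν μ hν hμ (t - τ).toNat]
    refine Finset.sum_congr rfl fun k hk => ?_
    have e1 : ((t - (τ + k) + 1 : ℤ) : ℝ) = (((t - τ).toNat : ℕ) : ℝ) - k + 1 := by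
      push_cast [hn]; ring
    have e2 : ((τ + k - τ + 1 : ℤ) : ℝ) = (k : ℝ) + 1 := by push_cast; ring
    rw [e1, e2]
  · rw [Finset.Icc_eq_empty (by omega), Finset.sum_empty,
      risingFac_nonpos (t - τ + 1) (by omega), mul_zero]

lemma fracSum_comp (ν μ : ℝ) (hν : 0 < ν) (hμ : 0 < μ) (a : ℤ) (g : ℤ → ℝ) (t : ℤ) :
    fracSum ν a (fracSum μ a g) t = fracSum (ν + μ) a g t := by
  have hΓν : Real.Gamma ν ≠ 0 := (Real.Gamma_pos_of_pos hν).ne'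
  have hΓμ : Real.Gamma μ ≠ 0 := (Real.Gamma_pos_of_pos hμ).ne'
  have hΓc : Real.Gamma (ν + μ) ≠ 0 := (Real.Gamma_pos_of_pos (by linarith)).ne'
  unfold fracSum
  simp only [Finset.mul_sum]
  have swap :
      ∑ s ∈ Finset.Icc a t, ∑ τ ∈ Finset.Icc a s,
          risingFac ((t - s + 1 : ℤ) : ℝ) (ν - 1) / Real.Gamma ν *
            (risingFac ((s - τ + 1 : ℤ) : ℝ) (μ - 1) / Real.Gamma μ * g τ)
        = ∑ τ ∈ Finset.Icc a t, ∑ s ∈ Finset.Icc τ t,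
            risingFac ((t - s + 1 : ℤ) : ℝ) (ν - 1) / Real.Gamma ν *
              (risingFac ((s - τ + 1 : ℤ) : ℝ) (μ - 1) / Real.Gamma μ * g τ) :=
    Finset.sum_comm' (by intro s τ; simp only [Finset.mem_Icc]; omega)
  rw [swap]
  refine Finset.sum_congr rfl fun τ hτ => ?_
  have hterm : ∀ s : ℤ,
      risingFac ((t - s + 1 : ℤ) : ℝ) (ν - 1) / Real.Gamma ν *
        (risingFac ((s - τ + 1 : ℤ) : ℝ) (μ - 1) / Real.Gamma μ * g τ)
      = risingFac ((t - s + 1 : ℤ) : ℝ) (ν - 1) * risingFac ((s - τ + 1 : ℤ) : ℝ) (μ - 1) *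
          (g τ / (Real.Gamma ν * Real.Gamma μ)) := fun s => by ring
  rw [Finset.sum_congr rfl fun s _ => hterm s, ← Finset.sum_mul, kernelZ ν μ hν hμ τ t]
  field_simp

lemma telescope_s1 (g : ℤ → ℝ) (a t : ℤ) (h : a - 1 ≤ t) :
    ∑ s ∈ Finset.Icc a t, (g s - g (s - 1)) = g t - g (a - 1) := by
  obtain ⟨n, rfl⟩ : ∃ n : ℕ, t = a - 1 + n := ⟨(t - (a - 1)).toNat, by omega⟩
  clear h
  induction n with
  | zero =>
    rw [show a - 1 + ((0 : ℕ) : ℤ) = a - 1 by push_cast; ring,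
      Finset.Icc_eq_empty (by omega), Finset.sum_empty, sub_self]
  | succ n ih =>
    have e : a - 1 + ((n + 1 : ℕ) : ℤ) = (a - 1 + n) + 1 := by push_cast; ring
    rw [e, Icc_succ_int a (a - 1 + n) (by omega),
      Finset.sum_insert (by simp only [Finset.mem_Icc]; omega), ih]
    have e2 : a - 1 + (n : ℤ) + 1 - 1 = a - 1 + n := by ring
    rw [e2]
    ring

lemma fracSum_one (a : ℤ) (g : ℤ → ℝ) (t : ℤ) (h : a - 1 ≤ t) :
    fracSum 1 a (nabla g) t = g t - g (a - 1) := by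
  unfold fracSum
  have h1 : ∀ s ∈ Finset.Icc a t,
      risingFac ((t - s + 1 : ℤ) : ℝ) (1 - 1) / Real.Gamma 1 * nabla g s = g s - g (s - 1) := by
    intro s hs
    have hs' := Finset.mem_Icc.mp hs
    have hpos : (0 : ℝ) < ((t - s + 1 : ℤ) : ℝ) := by exact_mod_cast (by omega : (0:ℤ) < t - s + 1)
    unfold risingFac nabla
    rw [sub_self, add_zero, div_self (Real.Gamma_pos_of_pos hpos).ne', Real.Gamma_one, div_one,
      one_mul]
  rw [Finset.sum_congr rfl h1, telescope_s1 g a t h]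

lemma fracSum_congr (ν : ℝ) (a t : ℤ) (g g' : ℤ → ℝ)
    (h : ∀ s ∈ Finset.Icc a t, g s = g' s) : fracSum ν a g t = fracSum ν a g' t :=
  Finset.sum_congr rfl fun s hs => by rw [h s hs]

lemma int_order (f : ℤ → ℝ) (a : ℤ) :
    ∀ M : ℕ, 0 < M → (∀ k < M, nabla^[k] f a = 0) → ∀ t : ℤ, a ≤ t →
      fracSum (M : ℝ) (a + 1) (nabla^[M] f) t = f t := by
  intro M
  induction M with
  | zero => intro h; exact absurd h (lt_irrefl 0)
  | succ M ih =>
    intro _ h0 t ht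
    have hfa : f a = 0 := by simpa using h0 0 (Nat.succ_pos M)
    rcases Nat.eq_zero_or_pos M with hM | hM
    · subst hM
      have : ((0 + 1 : ℕ) : ℝ) = 1 := by norm_num
      rw [this, Function.iterate_one, fracSum_one (a + 1) f t (by omega)]
      have ha : a + 1 - 1 = a := by ring
      rw [ha, hfa, sub_zero]
    · have hcast : ((M + 1 : ℕ) : ℝ) = (M : ℝ) + 1 := by push_cast; ring
      rw [hcast, ← fracSum_comp (M : ℝ) 1 (by exact_mod_cast hM) one_pos (a + 1)
        (nabla^[M + 1] f) t]
      have hcong : ∀ τ ∈ Finset.Icc (a + 1) t,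
          fracSum 1 (a + 1) (nabla^[M + 1] f) τ = nabla^[M] f τ := by
        intro τ hτ
        have hτ' := Finset.mem_Icc.mp hτ
        have hit : nabla^[M + 1] f = nabla (nabla^[M] f) := Function.iterate_succ_apply' nabla M f
        rw [hit, fracSum_one (a + 1) (nabla^[M] f) τ (by omega)]
        have ha : a + 1 - 1 = a := by ring
        rw [ha, h0 M (Nat.lt_succ_self M), sub_zero]
      rw [fracSum_congr (M : ℝ) (a + 1) t _ _ hcong]
      exact ih hM (fun k hk => h0 k (Nat.lt_succ_of_lt hk)) t ht

/-- Discrete backward fractional Taylor formula with vanishing lower differences. -/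
theorem discrete_nabla_fractional_taylor_of_deriv_zero
    (f : ℤ → ℝ) (a : ℤ) (μ : ℝ) (hμ : 0 < μ) (hμint : ∀ n : ℤ, μ ≠ n)
    (m : ℕ) (hm : m = ⌈μ⌉₊) (hm1 : (m : ℝ) - 1 < μ) (hm2 : μ < m)
    (hf0 : ∀ k < m, nabla^[k] f a = 0)
    (t : ℤ) (ht : a + m ≤ t) :
    f t = (1 / Real.Gamma μ) * ∑ τ ∈ Finset.Icc (a + 1) t,
        risingFac ((t - τ + 1 : ℤ) : ℝ) (μ - 1) * caputoNabla μ (a + 1) f τ := by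
  have hm0 : 0 < m := by
    rcases Nat.eq_zero_or_pos m with h | h
    · rw [h] at hm2; norm_num at hm2; linarith
    · exact h
  have hrhs : (1 / Real.Gamma μ) * ∑ τ ∈ Finset.Icc (a + 1) t,
      risingFac ((t - τ + 1 : ℤ) : ℝ) (μ - 1) * caputoNabla μ (a + 1) f τ
      = fracSum μ (a + 1) (caputoNabla μ (a + 1) f) t := by
    unfold fracSum
    rw [Finset.mul_sum]
    exact Finset.sum_congr rfl fun τ _ => by ring
  rw [hrhs]
  unfold caputoNabla
  rw [← hm, fracSum_comp μ ((m : ℝ) - μ) hμ (by linarith) (a + 1) (nabla^[m] f) t,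
    show μ + ((m : ℝ) - μ) = (m : ℝ) from by ring]
  have hat : a ≤ t := by
    have : (1 : ℤ) ≤ (m : ℤ) := by exact_mod_cast hm0
    omega
  rw [int_order f a m hm0 hf0 t hat]
end

section
/- Let p ∈ ℕ and ν > p, and let a ∈ ℕ. Then for every real valued function f defined on ℕ_a = {a, a+1, ...} and every t ∈ ℕ_a: ∇^p(∇_a^{−ν} f(t)) = ∇_a^{−(ν−p)} f(t). -/
open Finset

lemma nabla_fracSum_step (μ : ℝ) (hμ : 1 < μ) (a : ℤ) (f : ℤ → ℝ) :
    nabla (fracSum μ a f) = fracSum (μ - 1) a f := by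
  funext t
  have hΓμ : Real.Gamma μ ≠ 0 := (Real.Gamma_pos_of_pos (by linarith)).ne'
  have hΓμ1 : Real.Gamma (μ - 1) ≠ 0 := (Real.Gamma_pos_of_pos (by linarith)).ne'
  by_cases ht : a ≤ t
  · have hins : Finset.Icc a t = insert t (Finset.Icc a (t - 1)) := by
      ext x; simp only [Finset.mem_Icc, Finset.mem_insert]; omega
    have hnotmem : t ∉ Finset.Icc a (t - 1) := by simp
    simp only [nabla, fracSum, hins, Finset.sum_insert hnotmem]
    have h1 : ∀ ν : ℝ, 0 < ν →
        risingFac ((t - t + 1 : ℤ) : ℝ) (ν - 1) / Real.Gamma ν * f t = f t := by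
      intro ν hν
      have : ((t - t + 1 : ℤ) : ℝ) = 1 := by push_cast; ring
      rw [this, risingFac]
      rw [Real.Gamma_one]
      field_simp
      ring_nf
    rw [h1 μ (by linarith), h1 (μ - 1) (by linarith), add_sub_assoc,
      ← Finset.sum_sub_distrib]
    have : ∀ s ∈ Finset.Icc a (t - 1),
        risingFac ((t - s + 1 : ℤ) : ℝ) (μ - 1) / Real.Gamma μ * f s -
          risingFac ((t - 1 - s + 1 : ℤ) : ℝ) (μ - 1) / Real.Gamma μ * f s =
        risingFac ((t - s + 1 : ℤ) : ℝ) (μ - 1 - 1) / Real.Gamma (μ - 1) * f s := by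
      intro s hs
      have hs' : s ≤ t - 1 := (Finset.mem_Icc.mp hs).2
      set u : ℝ := ((t - s : ℤ) : ℝ) with hu
      have hu1 : (1 : ℝ) ≤ u := by
        rw [hu]; exact_mod_cast by omega
      have hupos : (0 : ℝ) < u := by linarith
      have c1 : ((t - s + 1 : ℤ) : ℝ) = u + 1 := by rw [hu]; push_cast; ring
      have c2 : ((t - 1 - s + 1 : ℤ) : ℝ) = u := by rw [hu]; push_cast; ring
      rw [c1, c2, risingFac, risingFac, risingFac]
      have hΓu : Real.Gamma u ≠ 0 := (Real.Gamma_pos_of_pos hupos).ne'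
      have e1 : Real.Gamma (u + 1) = u * Real.Gamma u := Real.Gamma_add_one hupos.ne'
      have e2 : Real.Gamma (u + 1 + (μ - 1)) = (u + μ - 1) * Real.Gamma (u + μ - 1) := by
        have : u + 1 + (μ - 1) = (u + μ - 1) + 1 := by ring
        rw [this, Real.Gamma_add_one (by nlinarith)]
      have e3 : Real.Gamma μ = (μ - 1) * Real.Gamma (μ - 1) := by
        have : μ = (μ - 1) + 1 := by ring
        rw [this, Real.Gamma_add_one (by linarith)]
        ring_nf
      have e4 : u + (μ - 1) = u + μ - 1 := by ring
      have e5 : u + 1 + (μ - 1 - 1) = u + μ - 1 := by ring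
      rw [e1, e2, e3, e4, e5]
      have hμ1 : μ - 1 ≠ 0 := by linarith
      have hu0 : u ≠ 0 := hupos.ne'
      field_simp
      ring
    rw [Finset.sum_congr rfl this]
  · have h1 : Finset.Icc a t = ∅ := by rw [Finset.Icc_eq_empty]; omega
    have h2 : Finset.Icc a (t - 1) = ∅ := by rw [Finset.Icc_eq_empty]; omega
    simp [nabla, fracSum, h1, h2]

/-- The p-th nabla difference of a fractional sum lowers the order by p. -/
theorem nabla_pow_fracSum (p : ℕ) (ν : ℝ) (hpν : (p : ℝ) < ν) (a : ℕ)
    (f : ℤ → ℝ) (t : ℤ) (ht : (a : ℤ) ≤ t) :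
    nabla^[p] (fracSum ν a f) t = fracSum (ν - p) a f t := by
  induction p generalizing ν with
  | zero => simp
  | succ n ih =>
    rw [Function.iterate_succ_apply, nabla_fracSum_step ν (by push_cast at hpν; linarith) a f]
    rw [ih (ν - 1) (by push_cast at hpν ⊢; linarith)]
    congr 1
    push_cast
    ring
end

section
/- Let f : ℤ → ℝ be a function and let a ∈ ℤ₊ (nonnegative integers). Let μ > 0 be non-integer with m − 1 < μ < m, where m = ⌈μ⌉, and let p ∈ ℕ with μ > p. Then for all t ∈ ℕ with t ≥ a + m, the extended discrete backward fractional Taylor formula holds: ∇^p f(t) = Σ_{k=p}^{m−1} ((t−a)^{↑(k−p)} / (k−p)!) · ∇^k f(a) + (1/Γ(μ−p)) · Σ_{τ=a+1}^{t} (t−τ+1)^{↑(μ−p−1)} · ∇_{(a+1)*}^{μ} f(τ). -/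
open Finset

/- ## Auxiliary machinery -/

/-- Generalized binomial coefficient `Γ(α+j)/(Γ(α)·j!)`. -/
noncomputable def Abin (α : ℝ) (j : ℕ) : ℝ := Real.Gamma (α + j) / (Real.Gamma α * j.factorial)

lemma Abin_zero (α : ℝ) (h : Real.Gamma α ≠ 0) : Abin α 0 = 1 := by
  simp [Abin, div_self h]

lemma Abin_succ_mul (α : ℝ) (j : ℕ) (hj : α + j ≠ 0) :
    ((j : ℝ) + 1) * Abin α (j + 1) = (α + j) * Abin α j := by
  have h1 : Real.Gamma (α + (j + 1 : ℕ)) = (α + j) * Real.Gamma (α + j) := by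
    push_cast
    rw [show α + ((j : ℝ) + 1) = (α + j) + 1 by ring, Real.Gamma_add_one hj]
  by_cases hΓ : Real.Gamma α = 0
  · simp [Abin, hΓ]
  · rw [Abin, Abin, h1, Nat.factorial_succ]
    have hf : (j.factorial : ℝ) ≠ 0 := Nat.cast_ne_zero.2 j.factorial_ne_zero
    have hj1 : ((j:ℝ)+1) ≠ 0 := by positivity
    push_cast
    field_simp

lemma gamma_ne_zero_of (α : ℝ) (hα : ∀ j : ℕ, α + j ≠ 0) : Real.Gamma α ≠ 0 := by
  refine Real.Gamma_ne_zero fun m => ?_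
  intro h
  exact hα m (by rw [h]; ring)

lemma vandermonde_key (α β : ℝ) (hα : ∀ j : ℕ, α + j ≠ 0) (hβ : ∀ j : ℕ, β + j ≠ 0) (n : ℕ) :
    ((n : ℝ) + 1) * ∑ j ∈ range (n + 2), Abin α j * Abin β (n + 1 - j) =
      (α + β + n) * ∑ j ∈ range (n + 1), Abin α j * Abin β (n - j) := by
  rw [Finset.mul_sum]
  have step1 : ∀ j ∈ range (n + 2), ((n : ℝ) + 1) * (Abin α j * Abin β (n + 1 - j)) =
      (j : ℝ) * (Abin α j * Abin β (n + 1 - j)) +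
        ((n + 1 - j : ℕ) : ℝ) * (Abin α j * Abin β (n + 1 - j)) := by
    intro j hj
    rw [mem_range] at hj
    have : ((n + 1 - j : ℕ) : ℝ) = (n : ℝ) + 1 - j := by
      rw [Nat.cast_sub (by omega)]; push_cast; ring
    rw [this]; ring
  rw [Finset.sum_congr rfl step1, Finset.sum_add_distrib]
  have e1 : ∑ j ∈ range (n + 2), (j : ℝ) * (Abin α j * Abin β (n + 1 - j)) =
      ∑ j ∈ range (n + 1), (α + j) * Abin α j * Abin β (n - j) := by
    rw [Finset.sum_range_succ']
    simp only [Nat.cast_zero, zero_mul, add_zero]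
    refine Finset.sum_congr rfl fun i hi => ?_
    push_cast
    rw [show ((i:ℝ)+1) * (Abin α (i+1) * Abin β (n-i)) =
      (((i:ℝ)+1) * Abin α (i+1)) * Abin β (n-i) by ring, Abin_succ_mul α i (hα i)]
  have e2 : ∑ j ∈ range (n + 2), ((n + 1 - j : ℕ) : ℝ) * (Abin α j * Abin β (n + 1 - j)) =
      ∑ j ∈ range (n + 1), (β + ((n - j : ℕ) : ℝ)) * Abin α j * Abin β (n - j) := by
    rw [Finset.sum_range_succ]
    simp only [Nat.sub_self, Nat.cast_zero, zero_mul, add_zero]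
    refine Finset.sum_congr rfl fun j hj => ?_
    rw [mem_range] at hj
    have h2 : n + 1 - j = (n - j) + 1 := by omega
    rw [h2]
    push_cast
    rw [show (((n-j:ℕ):ℝ)+1) * (Abin α j * Abin β ((n-j)+1)) =
      ((((n-j:ℕ):ℝ)+1) * Abin β ((n-j)+1)) * Abin α j by ring, Abin_succ_mul β (n-j) (hβ (n-j))]
    ring
  rw [e1, e2, ← Finset.sum_add_distrib, Finset.mul_sum]
  refine Finset.sum_congr rfl fun j hj => ?_
  rw [mem_range] at hj
  have : ((n - j : ℕ) : ℝ) = (n : ℝ) - j := by rw [Nat.cast_sub (by omega)]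
  rw [this]; ring

/-- Chu–Vandermonde identity for generalized binomial coefficients. -/
lemma vandermonde_s4 (α β : ℝ) (hα : ∀ j : ℕ, α + j ≠ 0) (hβ : ∀ j : ℕ, β + j ≠ 0)
    (hab : ∀ j : ℕ, (α + β) + j ≠ 0) (n : ℕ) :
    ∑ j ∈ range (n + 1), Abin α j * Abin β (n - j) = Abin (α + β) n := by
  induction n with
  | zero =>
      simp [Abin_zero α (gamma_ne_zero_of α hα), Abin_zero β (gamma_ne_zero_of β hβ),
        Abin_zero (α+β) (gamma_ne_zero_of _ hab)]
  | succ n ih =>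
      have key := vandermonde_key α β hα hβ n
      rw [ih] at key
      have key2 := Abin_succ_mul (α + β) n (hab n)
      have hn : ((n:ℝ)+1) ≠ 0 := by positivity
      exact mul_left_cancel₀ hn (key.trans key2.symm)

lemma Abin_one (k : ℕ) : Abin 1 k = 1 := by
  have : ((1:ℝ) + k) = (k:ℝ) + 1 := by ring
  rw [Abin, this, Real.Gamma_nat_eq_factorial, Real.Gamma_one, one_mul,
    div_self (Nat.cast_ne_zero.2 k.factorial_ne_zero)]

lemma risingFac_eq_Abin (γ : ℝ) (h : Real.Gamma (γ + 1) ≠ 0) (n : ℕ) :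
    risingFac ((n : ℝ) + 1) γ = Real.Gamma (γ + 1) * Abin (γ + 1) n := by
  rw [risingFac, Abin, Real.Gamma_nat_eq_factorial,
    show (n : ℝ) + 1 + γ = γ + 1 + n by ring]
  field_simp

lemma int_Icc_insert_top (a b : ℤ) (h : a ≤ b + 1) :
    Finset.Icc a (b + 1) = insert (b + 1) (Finset.Icc a b) := by
  ext x
  simp only [mem_Icc, mem_insert]
  omega

lemma sum_Icc_int_succ_top (a b : ℤ) (h : a ≤ b + 1) (F : ℤ → ℝ) :
    ∑ s ∈ Finset.Icc a (b + 1), F s = (∑ s ∈ Finset.Icc a b, F s) + F (b + 1) := by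
  rw [int_Icc_insert_top a b h, Finset.sum_insert (by simp), add_comm]

lemma sum_Icc_int_eq_range (u t : ℤ) (h : u ≤ t) (F : ℤ → ℝ) :
    ∑ s ∈ Finset.Icc u t, F s = ∑ j ∈ range ((t - u).toNat + 1), F (t - j) := by
  refine Finset.sum_nbij' (fun s => (t - s).toNat) (fun j => t - j) ?_ ?_ ?_ ?_ ?_
  · intro s hs; rw [mem_Icc] at hs; rw [mem_range]; omega
  · intro j hj; rw [mem_range] at hj; rw [mem_Icc]; omega
  · intro s hs; rw [mem_Icc] at hs; omega
  · intro j hj; rw [mem_range] at hj; omega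
  · intro s hs; rw [mem_Icc] at hs
    congr 1
    omega

lemma sum_Icc_Icc_comm_int (c t : ℤ) (F : ℤ → ℤ → ℝ) :
    ∑ τ ∈ Finset.Icc c t, ∑ s ∈ Finset.Icc c τ, F τ s
      = ∑ s ∈ Finset.Icc c t, ∑ τ ∈ Finset.Icc s t, F τ s := by
  rw [Finset.sum_sigma', Finset.sum_sigma']
  refine Finset.sum_nbij' (fun x => ⟨x.2, x.1⟩) (fun x => ⟨x.2, x.1⟩) ?_ ?_ ?_ ?_ ?_ <;>
    simp only [Finset.mem_sigma, mem_Icc, Sigma.forall] <;>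
    first
      | (rintro a b ⟨⟨h1, h2⟩, h3, h4⟩; omega)
      | (intros; trivial)

lemma telescope_int (g : ℤ → ℝ) (a : ℤ) : ∀ t, a ≤ t →
    g t = g a + ∑ s ∈ Finset.Icc (a + 1) t, (g s - g (s - 1)) := by
  refine Int.le_induction ?_ ?_
  · simp [Finset.Icc_eq_empty_of_lt (by omega : a + 1 > a)]
  · intro t ht ih
    rw [sum_Icc_int_succ_top _ _ (by omega), ← add_assoc, ← ih]
    simp

lemma risingFac_zero (x : ℝ) (hx : 0 < x) : risingFac x 0 = 1 := by
  rw [risingFac, add_zero, div_self (Real.Gamma_pos_of_pos hx).ne']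

lemma fac_ne (k : ℕ) : ((k.factorial : ℝ)) ≠ 0 := Nat.cast_ne_zero.2 k.factorial_ne_zero

lemma gamma_nat_succ (d : ℕ) : Real.Gamma ((d : ℝ) + 1) = d.factorial :=
  Real.Gamma_nat_eq_factorial d

/-- Hockey stick. -/
lemma hockey_s4 (d : ℕ) (u t : ℤ) (h : u ≤ t) :
    ∑ s ∈ Finset.Icc u t, risingFac ((t - s + 1 : ℤ) : ℝ) (d : ℝ) / (d.factorial : ℝ)
      = risingFac ((t - u + 1 : ℤ) : ℝ) ((d : ℝ) + 1) / ((d + 1).factorial : ℝ) := by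
  rw [sum_Icc_int_eq_range u t h]
  set n := (t - u).toNat with hn
  have hΓd : Real.Gamma ((d : ℝ) + 1) ≠ 0 := by rw [gamma_nat_succ]; exact fac_ne d
  have hΓd1 : Real.Gamma (((d : ℝ) + 1) + 1) ≠ 0 := by
    have : ((d : ℝ) + 1) + 1 = ((d + 1 : ℕ) : ℝ) + 1 := by push_cast; ring
    rw [this, gamma_nat_succ]; exact fac_ne (d + 1)
  have e1 : ∀ j ∈ range (n + 1),
      risingFac ((t - (t - j) + 1 : ℤ) : ℝ) (d : ℝ) / (d.factorial : ℝ)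
        = Abin ((d : ℝ) + 1) j * Abin 1 (n - j) := by
    intro j hj
    have : ((t - (t - j) + 1 : ℤ) : ℝ) = (j : ℝ) + 1 := by push_cast; ring
    rw [this, risingFac_eq_Abin _ hΓd, gamma_nat_succ, Abin_one, mul_comm,
      mul_div_assoc, div_self (fac_ne d), mul_one]
  rw [Finset.sum_congr rfl e1, vandermonde_s4 _ _ (fun j => by positivity) (fun j => by positivity)
    (fun j => by positivity)]
  have e2 : ((t - u + 1 : ℤ) : ℝ) = (n : ℝ) + 1 := by
    have h2 : (t - u + 1 : ℤ) = (n : ℤ) + 1 := by omega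
    rw [h2]; push_cast; ring
  rw [e2, show (d : ℝ) + 1 + 1 = ((d : ℝ) + 1) + 1 by ring,
    risingFac_eq_Abin _ hΓd1, show ((d : ℝ) + 1) + 1 = ((d + 1 : ℕ) : ℝ) + 1 by push_cast; ring,
    gamma_nat_succ, mul_comm, mul_div_assoc, div_self (fac_ne (d + 1)), mul_one]

/-- Convolution (discrete beta) identity. -/
lemma conv (α β : ℝ) (hα : ∀ j : ℕ, α + j ≠ 0) (hβ : ∀ j : ℕ, β + j ≠ 0)
    (hab : ∀ j : ℕ, (α + β) + j ≠ 0) (s t : ℤ) (h : s ≤ t) :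
    ∑ τ ∈ Finset.Icc s t, risingFac ((t - τ + 1 : ℤ) : ℝ) (α - 1)
        * risingFac ((τ - s + 1 : ℤ) : ℝ) (β - 1)
      = Real.Gamma α * Real.Gamma β / Real.Gamma (α + β)
          * risingFac ((t - s + 1 : ℤ) : ℝ) (α + β - 1) := by
  have hΓα : Real.Gamma α ≠ 0 := gamma_ne_zero_of α hα
  have hΓβ : Real.Gamma β ≠ 0 := gamma_ne_zero_of β hβ
  have hΓab : Real.Gamma (α + β) ≠ 0 := gamma_ne_zero_of _ hab
  rw [sum_Icc_int_eq_range s t h]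
  set n := (t - s).toNat with hn
  have e1 : ∀ j ∈ range (n + 1),
      risingFac ((t - (t - j) + 1 : ℤ) : ℝ) (α - 1) * risingFac (((t - j) - s + 1 : ℤ) : ℝ) (β - 1)
        = (Real.Gamma α * Real.Gamma β) * (Abin α j * Abin β (n - j)) := by
    intro j hj
    rw [mem_range] at hj
    have c1 : ((t - (t - j) + 1 : ℤ) : ℝ) = (j : ℝ) + 1 := by push_cast; ring
    have c2 : (((t - j) - s + 1 : ℤ) : ℝ) = ((n - j : ℕ) : ℝ) + 1 := by
      have h2 : ((t - j) - s + 1 : ℤ) = ((n - j : ℕ) : ℤ) + 1 := by omega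
      rw [h2]; push_cast; ring
    rw [c1, c2, risingFac_eq_Abin _ (by rw [sub_add_cancel]; exact hΓα),
      risingFac_eq_Abin _ (by rw [sub_add_cancel]; exact hΓβ), sub_add_cancel, sub_add_cancel]
    ring
  rw [Finset.sum_congr rfl e1, ← Finset.mul_sum, vandermonde_s4 α β hα hβ hab]
  have e2 : ((t - s + 1 : ℤ) : ℝ) = (n : ℝ) + 1 := by
    have h2 : (t - s + 1 : ℤ) = (n : ℤ) + 1 := by omega
    rw [h2]; push_cast; ring
  rw [e2, risingFac_eq_Abin _ (by rw [sub_add_cancel]; exact hΓab), sub_add_cancel]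
  field_simp

/-- Integer-order discrete Taylor formula. -/
lemma taylor_int_s4 (g : ℤ → ℝ) (a : ℤ) (d : ℕ) (t : ℤ) (ht : a + 1 ≤ t) :
    g t = (∑ k ∈ range (d + 1),
        risingFac ((t - a : ℤ) : ℝ) (k : ℝ) / (k.factorial : ℝ) * nabla^[k] g a)
      + ∑ s ∈ Finset.Icc (a + 1) t,
          risingFac ((t - s + 1 : ℤ) : ℝ) (d : ℝ) / (d.factorial : ℝ) * nabla^[d + 1] g s := by
  induction d with
  | zero =>
      have hpos : (0 : ℝ) < ((t - a : ℤ) : ℝ) := by exact_mod_cast (by omega : (0:ℤ) < t - a)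
      simp only [range_one, sum_singleton, Nat.cast_zero, Nat.factorial_zero, Nat.cast_one,
        Function.iterate_zero_apply, zero_add, Function.iterate_one, risingFac_zero _ hpos]
      have e1 : ∀ s ∈ Finset.Icc (a + 1) t,
          risingFac ((t - s + 1 : ℤ) : ℝ) (0 : ℝ) / (1 : ℝ) * nabla g s = g s - g (s - 1) := by
        intro s hs
        rw [mem_Icc] at hs
        have hpos2 : (0 : ℝ) < ((t - s + 1 : ℤ) : ℝ) := by
          exact_mod_cast (by omega : (0:ℤ) < t - s + 1)
        simp only [risingFac_zero _ hpos2, nabla]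
        ring
      rw [Finset.sum_congr rfl e1, div_one, one_mul]
      exact telescope_int g a t (by omega)
  | succ d ih =>
      rw [ih]
      conv_rhs => rw [Finset.sum_range_succ]
      have key : ∑ s ∈ Finset.Icc (a + 1) t,
            risingFac ((t - s + 1 : ℤ) : ℝ) (d : ℝ) / (d.factorial : ℝ) * nabla^[d + 1] g s
          = risingFac ((t - a : ℤ) : ℝ) (((d+1) : ℕ) : ℝ) / (((d+1)).factorial : ℝ)
              * nabla^[d + 1] g a
            + ∑ s ∈ Finset.Icc (a + 1) t,
                risingFac ((t - s + 1 : ℤ) : ℝ) (((d+1):ℕ) : ℝ) / (((d+1)).factorial : ℝ)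
                  * nabla^[d + 1 + 1] g s := by
        have e1 : ∀ s ∈ Finset.Icc (a + 1) t,
            risingFac ((t - s + 1 : ℤ) : ℝ) (d : ℝ) / (d.factorial : ℝ) * nabla^[d + 1] g s
              = risingFac ((t - s + 1 : ℤ) : ℝ) (d : ℝ) / (d.factorial : ℝ) * nabla^[d + 1] g a
                + ∑ u ∈ Finset.Icc (a + 1) s,
                    risingFac ((t - s + 1 : ℤ) : ℝ) (d : ℝ) / (d.factorial : ℝ)
                      * nabla^[d + 1 + 1] g u := by
          intro s hs
          rw [mem_Icc] at hs
          have htel := telescope_int (nabla^[d + 1] g) a s (by omega)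
          have e0 : ∀ u : ℤ, nabla^[d + 1] g u - nabla^[d + 1] g (u - 1)
              = nabla^[d + 1 + 1] g u := by
            intro u
            rw [Function.iterate_succ_apply' nabla (d+1) g]
            rfl
          calc risingFac ((t - s + 1 : ℤ) : ℝ) (d : ℝ) / (d.factorial : ℝ) * nabla^[d + 1] g s
              = risingFac ((t - s + 1 : ℤ) : ℝ) (d : ℝ) / (d.factorial : ℝ)
                  * (nabla^[d + 1] g a + ∑ u ∈ Finset.Icc (a + 1) s,
                      (nabla^[d + 1] g u - nabla^[d + 1] g (u - 1))) := by rw [← htel]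
            _ = _ := by
                rw [Finset.sum_congr rfl fun u _ => e0 u, mul_add, Finset.mul_sum]
        rw [Finset.sum_congr rfl e1, Finset.sum_add_distrib]
        congr 1
        · rw [← Finset.sum_mul, hockey_s4 d (a+1) t (by omega),
            show (t - (a+1) + 1 : ℤ) = t - a by ring]
          push_cast
          ring
        · rw [sum_Icc_Icc_comm_int (a + 1) t
            (fun s u => risingFac ((t - s + 1 : ℤ) : ℝ) (d : ℝ) / (d.factorial : ℝ)
              * nabla^[d + 1 + 1] g u)]
          refine Finset.sum_congr rfl fun u hu => ?_
          rw [mem_Icc] at hu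
          rw [← Finset.sum_mul, hockey_s4 d u t (by omega)]
          push_cast
          ring
      rw [key]
      ring

/-- Extended discrete backward fractional Taylor formula. -/
theorem discrete_nabla_fractional_taylor_extended
    (f : ℤ → ℝ) (a : ℕ) (μ : ℝ) (hμ : 0 < μ) (hμint : ∀ n : ℤ, μ ≠ n)
    (m : ℕ) (hm : m = ⌈μ⌉₊) (hm1 : (m : ℝ) - 1 < μ) (hm2 : μ < m)
    (p : ℕ) (hp : (p : ℝ) < μ)
    (t : ℤ) (ht : (a : ℤ) + m ≤ t) :
    nabla^[p] f t = (∑ k ∈ Finset.Icc p (m - 1),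
        risingFac ((t - a : ℤ) : ℝ) ((k - p : ℕ)) / (Nat.factorial (k - p)) *
          nabla^[k] f a) +
      (1 / Real.Gamma (μ - p)) * ∑ τ ∈ Finset.Icc ((a : ℤ) + 1) t,
        risingFac ((t - τ + 1 : ℤ) : ℝ) (μ - p - 1) * caputoNabla μ ((a : ℤ) + 1) f τ := by
  have hpm : p < m := by exact_mod_cast hp.trans hm2
  set d : ℕ := m - p - 1 with hdd
  have hd : m = p + d + 1 := by omega
  have ht1 : (a : ℤ) + 1 ≤ t := by omega
  have hα : ∀ j : ℕ, (μ - p) + j ≠ 0 := by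
    intro j h
    exact hμint ((p : ℤ) - j) (by push_cast; linarith)
  have hβ : ∀ j : ℕ, ((m : ℝ) - μ) + j ≠ 0 := by
    intro j h
    exact hμint ((m : ℤ) + j) (by push_cast; linarith)
  have hab : ∀ j : ℕ, ((μ - p) + ((m : ℝ) - μ)) + j ≠ 0 := by
    intro j h
    have h1 : ((p : ℝ) + 1) ≤ m := by exact_mod_cast hpm
    have h2 : (0 : ℝ) ≤ j := j.cast_nonneg
    linarith
  have hΓα : Real.Gamma (μ - p) ≠ 0 := gamma_ne_zero_of _ hα
  have hΓβ : Real.Gamma ((m : ℝ) - μ) ≠ 0 := gamma_ne_zero_of _ hβ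
  have hmd : (m : ℝ) - p = (d : ℝ) + 1 := by
    rw [hd]; push_cast; ring
  have hΓmp : Real.Gamma ((μ - p) + ((m : ℝ) - μ)) = (d.factorial : ℝ) := by
    rw [show (μ - p) + ((m : ℝ) - μ) = (m : ℝ) - p by ring, hmd, gamma_nat_succ]
  -- Second term reduction
  have hsecond : (1 / Real.Gamma (μ - p)) * ∑ τ ∈ Finset.Icc ((a : ℤ) + 1) t,
        risingFac ((t - τ + 1 : ℤ) : ℝ) (μ - p - 1) * caputoNabla μ ((a : ℤ) + 1) f τ
      = ∑ s ∈ Finset.Icc ((a : ℤ) + 1) t,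
          risingFac ((t - s + 1 : ℤ) : ℝ) (d : ℝ) / (d.factorial : ℝ)
            * nabla^[d + 1] (nabla^[p] f) s := by
    simp only [caputoNabla, fracSum, ← hm]
    have e1 : ∀ τ ∈ Finset.Icc ((a : ℤ) + 1) t,
        risingFac ((t - τ + 1 : ℤ) : ℝ) (μ - p - 1) *
            ∑ s ∈ Finset.Icc ((a : ℤ) + 1) τ,
              risingFac ((τ - s + 1 : ℤ) : ℝ) ((m : ℝ) - μ - 1) / Real.Gamma ((m : ℝ) - μ)
                * nabla^[m] f s
          = ∑ s ∈ Finset.Icc ((a : ℤ) + 1) τ,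
              (risingFac ((t - τ + 1 : ℤ) : ℝ) (μ - p - 1)
                * risingFac ((τ - s + 1 : ℤ) : ℝ) ((m : ℝ) - μ - 1))
                * (nabla^[m] f s / Real.Gamma ((m : ℝ) - μ)) := by
      intro τ hτ
      rw [Finset.mul_sum]
      exact Finset.sum_congr rfl fun s hs => by ring
    rw [Finset.sum_congr rfl e1, sum_Icc_Icc_comm_int ((a : ℤ) + 1) t
      (fun τ s => (risingFac ((t - τ + 1 : ℤ) : ℝ) (μ - p - 1)
        * risingFac ((τ - s + 1 : ℤ) : ℝ) ((m : ℝ) - μ - 1))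
        * (nabla^[m] f s / Real.Gamma ((m : ℝ) - μ)))]
    rw [Finset.mul_sum]
    refine Finset.sum_congr rfl fun s hs => ?_
    rw [mem_Icc] at hs
    rw [← Finset.sum_mul, conv (μ - p) ((m : ℝ) - μ) hα hβ hab s t hs.2]
    have hit : nabla^[m] f = nabla^[d + 1] (nabla^[p] f) := by
      rw [hd, show p + d + 1 = (d + 1) + p by ring, Function.iterate_add nabla (d+1) p]
      rfl
    have hexp : (μ - p) + ((m : ℝ) - μ) - 1 = (d : ℝ) := by
      rw [show (μ - p) + ((m : ℝ) - μ) = (m : ℝ) - p by ring, hmd]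
      ring
    rw [hΓmp, hit, hexp]
    field_simp
  rw [hsecond]
  -- First sum reduction
  have hfirst : (∑ k ∈ Finset.Icc p (m - 1),
        risingFac ((t - a : ℤ) : ℝ) ((k - p : ℕ)) / (Nat.factorial (k - p)) * nabla^[k] f a)
      = ∑ k ∈ range (d + 1),
          risingFac ((t - (a : ℤ) : ℤ) : ℝ) (k : ℝ) / (k.factorial : ℝ)
            * nabla^[k] (nabla^[p] f) a := by
    have hIcc : Finset.Icc p (m - 1) = Finset.Ico p m := by
      ext x
      simp only [mem_Icc, mem_Ico]
      omega
    rw [hIcc, Finset.sum_Ico_eq_sum_range, show m - p = d + 1 by omega]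
    refine Finset.sum_congr rfl fun k hk => ?_
    rw [show p + k - p = k by omega,
      show nabla^[k] (nabla^[p] f) a = nabla^[p + k] f a by
        rw [show p + k = k + p by ring, Function.iterate_add_apply]]
  rw [hfirst]
  exact taylor_int_s4 (nabla^[p] f) (a : ℤ) d t ht1
end

section
/- Let f : ℤ → ℝ be a function and let a ∈ ℤ₊. Let μ > 0 be non-integer with m − 1 < μ < m, where m = ⌈μ⌉, and let p ∈ ℕ with μ > p. Then for all t ∈ ℕ with t ≥ a + m: | ∇^p f(t) − Σ_{k=p}^{m−1} ((t−a)^{↑(k−p)}/(k−p)!) · ∇^k f(a) | ≤ ((t−a)^{↑(μ−p)}/Γ(μ−p+1)) · max_{τ ∈ {a+1,...,t}} |∇_{(a+1)*}^{μ} f(τ)|. -/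
open Finset

noncomputable def G (α : ℝ) (n : ℕ) : ℝ := (∏ i ∈ Finset.range n, (α + i)) / (Nat.factorial n)

lemma G_zero (α : ℝ) : G α 0 = 1 := by simp [G]

lemma fact_ne (n : ℕ) : ((Nat.factorial n : ℕ) : ℝ) ≠ 0 := by
  exact_mod_cast Nat.factorial_ne_zero n

lemma G_succ (α : ℝ) (n : ℕ) : G α (n+1) = G α n * (α + n) / (n+1) := by
  simp only [G, Finset.prod_range_succ, Nat.factorial_succ]
  push_cast
  rw [div_mul_eq_mul_div, div_div, mul_comm ((n:ℝ)+1)]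

lemma G_succ' (α : ℝ) (n : ℕ) : ((n:ℝ)+1) * G α (n+1) = (α + n) * G α n := by
  rw [G_succ]; field_simp

lemma G_pascal (α : ℝ) (n : ℕ) : G α (n+1) = G α n + G (α-1) (n+1) := by
  have h1 : ∏ i ∈ Finset.range (n+1), (α - 1 + i) = (α-1) * ∏ i ∈ Finset.range n, (α + i) := by
    rw [Finset.prod_range_succ']
    have : ∀ i ∈ Finset.range n, (α - 1 + ((i:ℕ)+1:ℕ)) = α + i := by
      intro i _; push_cast; ring
    rw [Finset.prod_congr rfl this]
    push_cast; ring
  simp only [G, Finset.prod_range_succ, h1, Nat.factorial_succ]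
  have h2 := fact_ne n
  have h3 : ((n:ℝ)+1) ≠ 0 := by positivity
  push_cast
  field_simp
  ring

lemma G_pos {α : ℝ} (hα : 0 < α) (n : ℕ) : 0 < G α n := by
  apply div_pos
  · apply Finset.prod_pos; intro i _; positivity
  · exact_mod_cast Nat.factorial_pos n

lemma G_hockey (α : ℝ) : ∀ K : ℕ, ∑ j ∈ Finset.range (K+1), G α j = G (α+1) K := by
  intro K
  induction K with
  | zero => simp [G_zero]
  | succ K ih =>
    rw [Finset.sum_range_succ, ih]
    have := G_pascal (α+1) K
    simp only [add_sub_cancel_right] at this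
    linarith

lemma G_zero_left {M : ℕ} (hM : 1 ≤ M) : G 0 M = 0 := by
  unfold G
  rw [Finset.prod_eq_zero (Finset.mem_range.mpr hM) (by simp)]
  simp

lemma G_vandermonde (α β : ℝ) : ∀ N : ℕ, ∑ j ∈ Finset.range (N+1), G α j * G β (N-j) = G (α+β) N := by
  intro N
  induction N with
  | zero => simp [G_zero]
  | succ N ih =>
    have hN1 : ((N:ℝ)+1) ≠ 0 := by positivity
    have key : ((N:ℝ)+1) * ∑ j ∈ Finset.range (N+2), G α j * G β (N+1-j)
        = ((N:ℝ)+1) * G (α+β) (N+1) := by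
      rw [Finset.mul_sum]
      have split : ∀ j ∈ Finset.range (N+2),
          ((N:ℝ)+1) * (G α j * G β (N+1-j))
          = (j:ℝ) * G α j * G β (N+1-j) + G α j * (((N+1-j:ℕ)):ℝ) * G β (N+1-j) := by
        intro j hj
        simp only [Finset.mem_range] at hj
        have : (((N+1-j:ℕ)):ℝ) = (N:ℝ)+1-j := by
          have : j ≤ N+1 := by omega
          push_cast [Nat.cast_sub this]; ring
        rw [this]; ring
      rw [Finset.sum_congr rfl split, Finset.sum_add_distrib]
      have S1 : ∑ j ∈ Finset.range (N+2), (j:ℝ) * G α j * G β (N+1-j)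
          = ∑ i ∈ Finset.range (N+1), (α+i) * G α i * G β (N-i) := by
        rw [Finset.sum_range_succ']
        simp only [Nat.cast_zero, zero_mul, add_zero]
        apply Finset.sum_congr rfl
        intro i _
        have h1 : ((i:ℝ)+1) * G α (i+1) = (α + i) * G α i := G_succ' α i
        push_cast
        calc ((i:ℝ)+1) * G α (i+1) * G β (N-i) = (((i:ℝ)+1) * G α (i+1)) * G β (N-i) := by ring
        _ = ((α + i) * G α i) * G β (N-i) := by rw [h1]
        _ = (α+i) * G α i * G β (N-i) := by ring
      have S2 : ∑ j ∈ Finset.range (N+2), G α j * (((N+1-j:ℕ)):ℝ) * G β (N+1-j)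
          = ∑ j ∈ Finset.range (N+1), G α j * ((β + ((N-j:ℕ):ℝ)) * G β (N-j)) := by
        rw [Finset.sum_range_succ]
        simp only [Nat.sub_self, Nat.cast_zero, mul_zero, zero_mul, add_zero]
        apply Finset.sum_congr rfl
        intro j hj
        simp only [Finset.mem_range] at hj
        have h2 : N+1-j = (N-j)+1 := by omega
        rw [h2]
        have h1 : (((N-j:ℕ):ℝ)+1) * G β ((N-j)+1) = (β + ((N-j:ℕ):ℝ)) * G β (N-j) := G_succ' β (N-j)
        push_cast
        calc G α j * (((N-j:ℕ):ℝ)+1) * G β ((N-j)+1)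
            = G α j * ((((N-j:ℕ):ℝ)+1) * G β ((N-j)+1)) := by ring
        _ = G α j * ((β + ((N-j:ℕ):ℝ)) * G β (N-j)) := by rw [h1]
      rw [S1, S2]
      have comb : ∑ i ∈ Finset.range (N+1), (α+i) * G α i * G β (N-i)
            + ∑ j ∈ Finset.range (N+1), G α j * ((β + ((N-j:ℕ):ℝ)) * G β (N-j))
          = (α+β+N) * ∑ j ∈ Finset.range (N+1), G α j * G β (N-j) := by
        rw [Finset.mul_sum, ← Finset.sum_add_distrib]
        apply Finset.sum_congr rfl
        intro j hj
        simp only [Finset.mem_range] at hj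
        have : ((N-j:ℕ):ℝ) = (N:ℝ)-j := by
          have : j ≤ N := by omega
          push_cast [Nat.cast_sub this]; ring
        rw [this]; ring
      rw [comb, ih]
      have := G_succ' (α+β) N
      linarith
    have := mul_left_cancel₀ hN1 key
    exact this

lemma asc_fact (x : ℕ) : ∀ y : ℕ, (∏ i ∈ Finset.range y, ((x:ℝ)+1+i)) * (Nat.factorial x) = (Nat.factorial (x+y)) := by
  intro y
  induction y with
  | zero => simp
  | succ y ih =>
    rw [Finset.prod_range_succ]
    have : x + (y+1) = (x+y) + 1 := by omega
    rw [this, Nat.factorial_succ]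
    push_cast
    nlinarith [ih]

lemma G_symm (x y : ℕ) : G ((x:ℝ)+1) y = G ((y:ℝ)+1) x := by
  unfold G
  rw [div_eq_div_iff (fact_ne y) (fact_ne x)]
  rw [asc_fact x y, asc_fact y x]
  norm_num [Nat.add_comm]

lemma G_one (n : ℕ) : G 1 n = 1 := by
  have := G_symm 0 n
  simp only [Nat.cast_zero, zero_add] at this
  rw [this, G]
  simp

lemma coeff {M : ℕ} (hM : 1 ≤ M) (n : ℕ) : ∑ j ∈ Finset.range n, G (M:ℝ) (n-1-j) = G (n:ℝ) M := by
  cases n with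
  | zero => simp [G_zero_left hM]
  | succ K =>
    have h1 : ∀ j ∈ Finset.range (K+1), G (M:ℝ) (K+1-1-j) = G (M:ℝ) (K-j) := by
      intro j _; norm_num
    rw [Finset.sum_congr rfl h1]
    have h2 : ∑ j ∈ Finset.range (K+1), G (M:ℝ) (K-j) = ∑ j ∈ Finset.range (K+1), G (M:ℝ) j := by
      have := Finset.sum_range_reflect (fun j => G (M:ℝ) j) (K+1)
      simpa using this
    rw [h2, G_hockey, G_symm M K]
    norm_cast

lemma swap_sum (n : ℕ) (A : ℕ → ℕ → ℝ) :
    ∑ i ∈ Finset.range n, ∑ j ∈ Finset.range (i+1), A i j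
      = ∑ j ∈ Finset.range n, ∑ i ∈ Finset.Ico j n, A i j := by
  apply Finset.sum_comm'
  intro i j
  simp only [Finset.mem_range, Finset.mem_Ico]
  omega

lemma coeff2 {M : ℕ} (hM : 1 ≤ M) {n r : ℕ} (hr : r < n) :
    ∑ i ∈ Finset.Ico r n, G (M:ℝ) (n-1-i) = G ((M:ℝ)+1) (n-1-r) := by
  rw [Finset.sum_Ico_eq_sum_range]
  have h1 : ∀ l ∈ Finset.range (n-r), G (M:ℝ) (n-1-(r+l)) = G (M:ℝ) ((n-r)-1-l) := by
    intro l _; congr 1; omega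
  rw [Finset.sum_congr rfl h1]
  have h2 : ∑ l ∈ Finset.range (n-r), G (M:ℝ) ((n-r)-1-l) = ∑ l ∈ Finset.range (n-r), G (M:ℝ) l :=
    Finset.sum_range_reflect _ _
  rw [h2]
  have h3 : n - r = (n-1-r)+1 := by omega
  rw [h3, G_hockey]

lemma tele (g : ℤ → ℝ) (A : ℤ) : ∀ n : ℕ, g (A + n) = g A + ∑ j ∈ Finset.range n, nabla g (A+1+j) := by
  intro n
  induction n with
  | zero => simp
  | succ n ih =>
    have h : (A + ((n+1 : ℕ)) : ℤ) = (A + 1 + n) := by push_cast; ring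
    rw [Finset.sum_range_succ, ← add_assoc, ← ih, h]
    simp only [nabla]
    rw [show (A + 1 + (n:ℤ) - 1) = A + n by ring]
    ring

lemma taylor (g : ℤ → ℝ) (A : ℤ) : ∀ (M : ℕ), 1 ≤ M → ∀ n : ℕ,
    g (A + n) = (∑ k ∈ Finset.range M, G (n:ℝ) k * nabla^[k] g A)
      + ∑ j ∈ Finset.range n, G (M:ℝ) (n-1-j) * nabla^[M] g (A+1+j) := by
  intro M
  induction M with
  | zero => omega
  | succ M ih =>
    intro _ n
    rcases Nat.eq_zero_or_pos M with hM0 | hM1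
    · subst hM0
      have hyp := tele g A n
      rw [Finset.sum_range_one, Function.iterate_zero_apply, G_zero, one_mul]
      have hc : ∀ j ∈ Finset.range n, G (((0:ℕ)+1 : ℕ):ℝ) (n-1-j) * nabla^[0+1] g (A+1+j)
          = nabla g (A+1+j) := by
        intro j _
        norm_num [G_one, Function.iterate_one]
      rw [Finset.sum_congr rfl hc]
      exact hyp
    · rw [ih hM1 n]
      have expand : ∀ j : ℕ, nabla^[M] g (A+1+j)
          = nabla^[M] g A + ∑ r ∈ Finset.range (j+1), nabla^[M+1] g (A+1+r) := by
        intro j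
        have h := tele (nabla^[M] g) A (j+1)
        rw [show (A + ((j+1:ℕ):ℤ)) = A+1+j by push_cast; ring] at h
        rw [Function.iterate_succ_apply' nabla M g]
        exact h
      have key : ∑ j ∈ Finset.range n, G (M:ℝ) (n-1-j) * nabla^[M] g (A+1+j)
          = G (n:ℝ) M * nabla^[M] g A
            + ∑ r ∈ Finset.range n, G ((M:ℝ)+1) (n-1-r) * nabla^[M+1] g (A+1+r) := by
        have e1 : ∀ j ∈ Finset.range n, G (M:ℝ) (n-1-j) * nabla^[M] g (A+1+j)
            = G (M:ℝ) (n-1-j) * nabla^[M] g A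
              + ∑ r ∈ Finset.range (j+1), G (M:ℝ) (n-1-j) * nabla^[M+1] g (A+1+r) := by
          intro j _
          rw [expand j, mul_add, Finset.mul_sum]
        rw [Finset.sum_congr rfl e1, Finset.sum_add_distrib, ← Finset.sum_mul, coeff hM1 n,
            swap_sum n (fun i r => G (M:ℝ) (n-1-i) * nabla^[M+1] g (A+1+r))]
        congr 1
        apply Finset.sum_congr rfl
        intro r hr
        rw [← Finset.sum_mul, coeff2 hM1 (Finset.mem_range.mp hr)]
      rw [key, Finset.sum_range_succ]
      push_cast
      ring

lemma Gamma_shift {x : ℝ} (hx : 0 < x) : ∀ n : ℕ,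
    Real.Gamma (x + n) = (∏ i ∈ Finset.range n, (x+i)) * Real.Gamma x := by
  intro n
  induction n with
  | zero => simp
  | succ n ih =>
    have h1 : x + ((n:ℝ)+1) = (x + n) + 1 := by ring
    have h2 : x + (n:ℝ) ≠ 0 := by positivity
    push_cast
    rw [h1, Real.Gamma_add_one h2, ih, Finset.prod_range_succ]
    ring

lemma rfG1 {ν : ℝ} (hν : 0 < ν) (n : ℕ) :
    risingFac ((n:ℝ)+1) (ν-1) / Real.Gamma ν = G ν n := by
  unfold risingFac
  have h1 : ((n:ℝ)+1) + (ν-1) = ν + n := by ring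
  rw [h1, Gamma_shift hν n]
  have h2 : Real.Gamma ((n:ℝ)+1) = Nat.factorial n := by
    exact_mod_cast Real.Gamma_nat_eq_factorial n
  rw [h2]
  have h3 : Real.Gamma ν ≠ 0 := ne_of_gt (Real.Gamma_pos_of_pos hν)
  rw [G]
  field_simp

lemma rfG2 {n : ℕ} (hn : 1 ≤ n) (k : ℕ) :
    risingFac (n:ℝ) (k:ℝ) / (Nat.factorial k : ℝ) = G (n:ℝ) k := by
  unfold risingFac
  have hx : (0:ℝ) < n := by exact_mod_cast hn
  rw [Gamma_shift hx k]
  have h3 : Real.Gamma (n:ℝ) ≠ 0 := ne_of_gt (Real.Gamma_pos_of_pos hx)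
  rw [G]
  field_simp

lemma rfG3 {ν : ℝ} (hν : 0 < ν) {n : ℕ} (hn : 1 ≤ n) :
    risingFac (n:ℝ) ν / Real.Gamma (ν+1) = G (ν+1) (n-1) := by
  unfold risingFac
  have h1 : (n:ℝ) + ν = ν + n := by ring
  rw [h1, Gamma_shift hν n]
  have h2 : Real.Gamma (n:ℝ) = Nat.factorial (n-1) := by
    have : ((n-1:ℕ):ℝ) + 1 = n := by
      have : (1:ℕ) ≤ n := hn
      push_cast [Nat.cast_sub this]
      ring
    rw [← this]
    exact_mod_cast Real.Gamma_nat_eq_factorial (n-1)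
  have h4 : ∏ i ∈ Finset.range n, (ν + i) = ν * ∏ i ∈ Finset.range (n-1), (ν+1+i) := by
    rw [show n = (n-1)+1 by omega, Finset.prod_range_succ']
    have : ∀ i ∈ Finset.range (n-1), (ν + ((i+1:ℕ):ℝ)) = ν+1+i := by
      intro i _; push_cast; ring
    rw [Finset.prod_congr rfl this]
    simp [mul_comm]
  rw [h2, Real.Gamma_add_one (ne_of_gt hν), h4, G]
  have h3 : Real.Gamma ν ≠ 0 := ne_of_gt (Real.Gamma_pos_of_pos hν)
  have h5 : (0:ℝ) < ν := hν
  field_simp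

lemma sum_Icc_range (c : ℤ) (F : ℤ → ℝ) : ∀ i : ℕ,
    ∑ s ∈ Finset.Icc c (c+i), F s = ∑ j ∈ Finset.range (i+1), F (c+j) := by
  intro i
  induction i with
  | zero => simp
  | succ i ih =>
    have hins : Finset.Icc c (c+((i+1:ℕ):ℤ)) = insert (c+((i+1:ℕ):ℤ)) (Finset.Icc c (c+(i:ℕ))) := by
      ext x
      simp only [Finset.mem_Icc, Finset.mem_insert]
      push_cast
      omega
    rw [hins, Finset.sum_insert (by simp only [Finset.mem_Icc]; push_cast; omega),
        Finset.sum_range_succ, ih]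
    push_cast
    ring


/-- Estimate of the remainder of the extended discrete backward fractional Taylor formula. -/
theorem discrete_nabla_fractional_taylor_extended_remainder_bound
    (f : ℤ → ℝ) (a : ℕ) (μ : ℝ) (hμ : 0 < μ) (hμint : ∀ n : ℤ, μ ≠ n)
    (m : ℕ) (hm : m = ⌈μ⌉₊) (hm1 : (m : ℝ) - 1 < μ) (hm2 : μ < m)
    (p : ℕ) (hp : (p : ℝ) < μ)
    (t : ℤ) (ht : (a : ℤ) + m ≤ t) :
    |nabla^[p] f t - ∑ k ∈ Finset.Icc p (m - 1),
        risingFac ((t - a : ℤ) : ℝ) ((k - p : ℕ)) / (Nat.factorial (k - p)) *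
          nabla^[k] f a| ≤
      risingFac ((t - a : ℤ) : ℝ) (μ - p) / Real.Gamma (μ - p + 1) *
        sSup ((fun τ : ℤ => |caputoNabla μ ((a : ℤ) + 1) f τ|) ''
          Set.Icc ((a : ℤ) + 1) t) := by
  have hm0 : 1 ≤ m := by
    rw [hm]; exact Nat.one_le_ceil_iff.mpr hμ
  have hpm : p < m := by
    by_contra h
    push_neg at h
    have : (m:ℝ) ≤ p := by exact_mod_cast h
    linarith
  set A : ℤ := (a:ℤ) with hA
  set n : ℕ := (t - A).toNat with hn
  have hnt : (n:ℤ) = t - A := Int.toNat_of_nonneg (by omega)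
  have hnm : m ≤ n := by omega
  have hn1 : 1 ≤ n := le_trans hm0 hnm
  set ν : ℝ := μ - p with hνdef
  have hν : 0 < ν := by rw [hνdef]; linarith
  have hβ : 0 < (m:ℝ) - μ := by linarith
  have hbase : ((t - A : ℤ) : ℝ) = (n:ℝ) := by exact_mod_cast congrArg (Int.cast : ℤ → ℝ) hnt.symm
  -- caputo expansion
  have capu : ∀ i : ℕ, caputoNabla μ (A+1) f (A+1+(i:ℤ))
      = ∑ j ∈ Finset.range (i+1), G ((m:ℝ)-μ) (i-j) * nabla^[m] f (A+1+(j:ℤ)) := by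
    intro i
    unfold caputoNabla fracSum
    rw [← hm, sum_Icc_range (A+1) _ i]
    apply Finset.sum_congr rfl
    intro j hj
    simp only [Finset.mem_range] at hj
    have h1 : (A+1+(i:ℤ) - (A+1+(j:ℤ)) + 1) = ((i-j : ℕ) : ℤ) + 1 := by
      push_cast [Nat.cast_sub (by omega : j ≤ i)]
      ring
    rw [h1]
    have h2 := rfG1 hβ (i-j)
    push_cast
    rw [h2]
  -- taylor expansion of nabla^[p] f
  have htay := taylor (nabla^[p] f) A (m-p) (by omega) n
  have hAn : A + (n:ℤ) = t := by omega
  rw [hAn] at htay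
  have hiter : ∀ (k : ℕ) (x : ℤ), nabla^[k] (nabla^[p] f) x = nabla^[k+p] f x := by
    intro k x
    rw [Function.iterate_add_apply]
  simp only [hiter] at htay
  rw [show m-p+p = m by omega] at htay
  -- k-sum conversion
  have hksum : ∑ k ∈ Finset.Icc p (m-1),
        risingFac ((t - A : ℤ) : ℝ) ((k - p : ℕ)) / (Nat.factorial (k - p)) * nabla^[k] f A
      = ∑ k ∈ Finset.range (m-p), G (n:ℝ) k * nabla^[k+p] f A := by
    rw [(by ext x; simp only [Finset.mem_Icc, Finset.mem_Ico]; omega : Finset.Icc p (m-1) = Finset.Ico p m), Finset.sum_Ico_eq_sum_range]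
    apply Finset.sum_congr rfl
    intro i _
    rw [show p + i - p = i by omega, hbase, rfG2 hn1 i, Nat.add_comm p i]
  -- Vandermonde step
  have hV : ∑ i ∈ Finset.range n, G ν (n-1-i) * caputoNabla μ (A+1) f (A+1+(i:ℤ))
      = ∑ j ∈ Finset.range n, G (((m-p:ℕ)):ℝ) (n-1-j) * nabla^[m] f (A+1+(j:ℤ)) := by
    have e1 : ∀ i ∈ Finset.range n, G ν (n-1-i) * caputoNabla μ (A+1) f (A+1+(i:ℤ))
        = ∑ j ∈ Finset.range (i+1),
            G ν (n-1-i) * (G ((m:ℝ)-μ) (i-j) * nabla^[m] f (A+1+(j:ℤ))) := by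
      intro i _
      rw [capu i, Finset.mul_sum]
    rw [Finset.sum_congr rfl e1,
        swap_sum n (fun i j => G ν (n-1-i) * (G ((m:ℝ)-μ) (i-j) * nabla^[m] f (A+1+(j:ℤ))))]
    apply Finset.sum_congr rfl
    intro j hj
    simp only [Finset.mem_range] at hj
    have e2 : ∀ i ∈ Finset.Ico j n, G ν (n-1-i) * (G ((m:ℝ)-μ) (i-j) * nabla^[m] f (A+1+(j:ℤ)))
        = (G ν (n-1-i) * G ((m:ℝ)-μ) (i-j)) * nabla^[m] f (A+1+(j:ℤ)) := by
      intro i _; ring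
    rw [Finset.sum_congr rfl e2, ← Finset.sum_mul]
    congr 1
    rw [Finset.sum_Ico_eq_sum_range]
    have e3 : ∀ l ∈ Finset.range (n-j), G ν (n-1-(j+l)) * G ((m:ℝ)-μ) (j+l-j)
        = G ((m:ℝ)-μ) l * G ν ((n-1-j)-l) := by
      intro l _
      rw [show j+l-j = l by omega, show n-1-(j+l) = (n-1-j)-l by omega]
      ring
    rw [Finset.sum_congr rfl e3, show n-j = (n-1-j)+1 by omega,
        G_vandermonde ((m:ℝ)-μ) ν (n-1-j)]
    congr 1
    rw [hνdef]
    push_cast [Nat.cast_sub hpm.le]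
    ring
  -- the remainder identity
  have main : nabla^[p] f t - ∑ k ∈ Finset.Icc p (m-1),
        risingFac ((t - A : ℤ) : ℝ) ((k - p : ℕ)) / (Nat.factorial (k - p)) * nabla^[k] f A
      = ∑ i ∈ Finset.range n, G ν (n-1-i) * caputoNabla μ (A+1) f (A+1+(i:ℤ)) := by
    rw [hksum, hV, htay]
    ring
  -- the bound
  have hmem : ∀ i ∈ Finset.range n, |caputoNabla μ (A+1) f (A+1+(i:ℤ))|
      ≤ sSup ((fun τ : ℤ => |caputoNabla μ (A+1) f τ|) '' Set.Icc (A+1) t) := by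
    intro i hi
    simp only [Finset.mem_range] at hi
    apply le_csSup
    · exact Set.Finite.bddAbove ((Set.finite_Icc _ _).image _)
    · exact ⟨A+1+(i:ℤ), ⟨by omega, by omega⟩, rfl⟩
  set Msup := sSup ((fun τ : ℤ => |caputoNabla μ (A+1) f τ|) '' Set.Icc (A+1) t) with hMs
  have habs : |∑ i ∈ Finset.range n, G ν (n-1-i) * caputoNabla μ (A+1) f (A+1+(i:ℤ))|
      ≤ (∑ i ∈ Finset.range n, G ν (n-1-i)) * Msup := by
    calc |∑ i ∈ Finset.range n, G ν (n-1-i) * caputoNabla μ (A+1) f (A+1+(i:ℤ))|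
        ≤ ∑ i ∈ Finset.range n, |G ν (n-1-i) * caputoNabla μ (A+1) f (A+1+(i:ℤ))| :=
          Finset.abs_sum_le_sum_abs _ _
      _ ≤ ∑ i ∈ Finset.range n, G ν (n-1-i) * Msup := by
          apply Finset.sum_le_sum
          intro i hi
          rw [abs_mul, abs_of_pos (G_pos hν _)]
          exact mul_le_mul_of_nonneg_left (hmem i hi) (le_of_lt (G_pos hν _))
      _ = (∑ i ∈ Finset.range n, G ν (n-1-i)) * Msup := by rw [Finset.sum_mul]
  have hsumw : ∑ i ∈ Finset.range n, G ν (n-1-i) = G (ν+1) (n-1) := by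
    rw [Finset.sum_range_reflect (fun i => G ν i) n,
        show Finset.range n = Finset.range ((n-1)+1) by congr 1; omega,
        G_hockey]
  have hrf : risingFac ((t - A : ℤ) : ℝ) (μ - p) / Real.Gamma (μ - p + 1) = G (ν+1) (n-1) := by
    rw [hbase, hνdef]
    exact rfG3 hν hn1
  calc |nabla^[p] f t - ∑ k ∈ Finset.Icc p (m-1),
        risingFac ((t - A : ℤ) : ℝ) ((k - p : ℕ)) / (Nat.factorial (k - p)) * nabla^[k] f A|
      = |∑ i ∈ Finset.range n, G ν (n-1-i) * caputoNabla μ (A+1) f (A+1+(i:ℤ))| := by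
        rw [main]
    _ ≤ (∑ i ∈ Finset.range n, G ν (n-1-i)) * Msup := habs
    _ = G (ν+1) (n-1) * Msup := by rw [hsumw]
    _ = risingFac ((t - A : ℤ) : ℝ) (μ - p) / Real.Gamma (μ - p + 1) * Msup := by rw [hrf]
end

section
/- (Discrete nabla fractional Ostrowski inequality.) Let μ > 0 be non-integer with m − 1 < μ < m, m = ⌈μ⌉, let p, a ∈ ℤ₊ with μ > p, and let b ∈ ℕ with a + m < b. Let f be a real valued function defined on the discrete interval [a−m+1, a−m+2, ..., b]. Assume ∇^k f(a) = 0 for k = p+1, ..., m−1. Then | (1/(b−a−m)) · Σ_{j=a+m+1}^{b} ∇^p f(j) − ∇^p f(a) | ≤ ( ( (b−a)^{↑(μ−p+1)} − m^{↑(μ−p+1)} ) / ( Γ(μ−p+2) · (b−a−m) ) ) · max_{τ ∈ {a+1,...,b}} |∇_{(a+1)*}^{μ} f(τ)|. -/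
open Finset

lemma Rpos (k : ℤ) (hk : 1 ≤ k) (α : ℝ) (hα : 0 < (k : ℝ) + α) : 0 < risingFac (k : ℝ) α := by
  have h1 : (0:ℝ) < (k:ℝ) := by exact_mod_cast hk
  exact div_pos (Real.Gamma_pos_of_pos hα) (Real.Gamma_pos_of_pos h1)

lemma Rzero (α : ℝ) : risingFac 0 α = 0 := by
  simp [risingFac, Real.Gamma_zero]

lemma Rint_zero (k : ℤ) (hk : 1 ≤ k) : risingFac (k : ℝ) 0 = 1 := by
  have h1 : (0:ℝ) < (k:ℝ) := by exact_mod_cast hk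
  simp [risingFac, div_self (Real.Gamma_pos_of_pos h1).ne']

lemma Rint_one (k : ℤ) (hk : 0 ≤ k) : risingFac (k : ℝ) 1 = (k : ℝ) := by
  rcases eq_or_lt_of_le hk with h | h
  · rw [← h]; push_cast; rw [Rzero]
  · have h1 : (0:ℝ) < (k:ℝ) := by exact_mod_cast h
    rw [risingFac, Real.Gamma_add_one h1.ne']
    field_simp [(Real.Gamma_pos_of_pos h1).ne']

lemma Rrec (n : ℕ) (ν : ℝ) (hν : -1 < ν) :
    risingFac (↑n + 1) (ν + 1) = risingFac (↑n) (ν + 1) + (ν + 1) * risingFac (↑n + 1) ν := by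
  have hν1 : ν + 1 ≠ 0 := by linarith
  rcases Nat.eq_zero_or_pos n with h | h
  · subst h
    simp only [Nat.cast_zero, Rzero, zero_add]
    rw [risingFac, risingFac]
    have : (1:ℝ) + (ν + 1) = (1 + ν) + 1 := by ring
    rw [this, Real.Gamma_add_one (by linarith : (1:ℝ) + ν ≠ 0)]
    ring_nf
  · have hn : (0:ℝ) < (n:ℝ) := by exact_mod_cast h
    have hn1 : (1:ℝ) ≤ (n:ℝ) := by exact_mod_cast h
    have h2 : (n:ℝ) + ν + 1 ≠ 0 := by linarith
    rw [risingFac, risingFac, risingFac]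
    have e1 : (n:ℝ) + 1 + (ν + 1) = ((n:ℝ) + 1 + ν) + 1 := by ring
    have e2 : (n:ℝ) + (ν + 1) = ((n:ℝ) + ν) + 1 := by ring
    have e3 : (n:ℝ) + 1 + ν = ((n:ℝ) + ν) + 1 := by ring
    rw [e1, e3, Real.Gamma_add_one (by linarith : (n:ℝ) + ν + 1 ≠ 0), e2,
      Real.Gamma_add_one (by nlinarith : (n:ℝ) + ν ≠ 0)]
    have e4 : (n:ℝ) + 1 = (n:ℝ) + 1 := rfl
    rw [show ((n:ℝ) + 1) = ((n:ℝ)) + 1 from rfl, Real.Gamma_add_one hn.ne']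
    field_simp [(Real.Gamma_pos_of_pos hn).ne', (Real.Gamma_pos_of_pos (by linarith : (0:ℝ) < (n:ℝ)+ν)).ne']
    ring
  
lemma sum_R (ν : ℝ) (hν : -1 < ν) (n : ℕ) :
    ∑ u ∈ range n, risingFac (↑u + 1) ν = risingFac (↑n) (ν + 1) / (ν + 1) := by
  have hν1 : ν + 1 ≠ 0 := by linarith
  induction n with
  | zero => simp [Rzero]
  | succ n ih =>
    rw [Finset.sum_range_succ, ih]
    push_cast
    rw [Rrec n ν hν]
    field_simp

noncomputable def gQuot (ν : ℝ) (k : ℕ) : ℝ := Real.Gamma (↑k + ν) / Real.Gamma (↑k + 1)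

lemma gQuot_eq (ν : ℝ) (k : ℕ) : gQuot ν k = risingFac (↑k + 1) (ν - 1) := by
  rw [gQuot, risingFac]
  ring_nf

lemma gQuot_succ (ν : ℝ) (hν : 0 < ν) (k : ℕ) :
    (↑k + 1) * gQuot ν (k + 1) = (↑k + ν) * gQuot ν k := by
  have h1 : (0:ℝ) < ↑k + 1 := by positivity
  have h2 : (0:ℝ) < ↑k + ν := by positivity
  rw [gQuot, gQuot]
  push_cast
  rw [show (k:ℝ) + 1 + ν = ((k:ℝ) + ν) + 1 by ring, Real.Gamma_add_one h2.ne',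
    show (k:ℝ) + 1 + 1 = ((k:ℝ) + 1) + 1 by ring, Real.Gamma_add_one h1.ne']
  field_simp [(Real.Gamma_pos_of_pos h1).ne', (Real.Gamma_pos_of_pos h2).ne']

lemma beta_step (ν κ : ℝ) (hν : 0 < ν) (hκ : 0 < κ) (n : ℕ) :
    ((n:ℝ) + 1) * ∑ u ∈ range (n + 2), gQuot ν (n + 1 - u) * gQuot κ u
      = ((n:ℝ) + ν + κ) * ∑ u ∈ range (n + 1), gQuot ν (n - u) * gQuot κ u := by
  rw [Finset.mul_sum, Finset.mul_sum]
  have split : ∀ u ∈ range (n + 2),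
      ((n:ℝ) + 1) * (gQuot ν (n + 1 - u) * gQuot κ u)
        = (↑(n + 1 - u) : ℝ) * gQuot ν (n + 1 - u) * gQuot κ u
          + (u:ℝ) * gQuot ν (n + 1 - u) * gQuot κ u := by
    intro u hu
    have hu' : u ≤ n + 1 := by simpa [Nat.lt_succ_iff] using hu
    have : ((n + 1 - u : ℕ) : ℝ) = (n:ℝ) + 1 - (u:ℝ) := by
      push_cast [Nat.cast_sub hu']; ring
    rw [this]; ring
  rw [Finset.sum_congr rfl split, Finset.sum_add_distrib]
  have e1 : ∑ u ∈ range (n + 2), (↑(n + 1 - u) : ℝ) * gQuot ν (n + 1 - u) * gQuot κ u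
      = ∑ u ∈ range (n + 1), ((↑(n - u) : ℝ) + ν) * gQuot ν (n - u) * gQuot κ u := by
    rw [Finset.sum_range_succ]
    simp only [Nat.sub_self, Nat.cast_zero, zero_mul]
    rw [add_zero]
    refine Finset.sum_congr rfl fun u hu => ?_
    have hu' : u ≤ n := by simpa [Nat.lt_succ_iff] using hu
    have h : n + 1 - u = (n - u) + 1 := by omega
    rw [h]
    have := gQuot_succ ν hν (n - u)
    push_cast at this ⊢
    linear_combination gQuot κ u * this
  have e2 : ∑ u ∈ range (n + 2), (u:ℝ) * gQuot ν (n + 1 - u) * gQuot κ u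
      = ∑ u ∈ range (n + 1), gQuot ν (n - u) * ((↑u + κ) * gQuot κ u) := by
    rw [Finset.sum_range_succ']
    simp only [Nat.cast_zero, zero_mul, add_zero]
    refine Finset.sum_congr rfl fun u hu => ?_
    have h : n + 1 - (u + 1) = n - u := by omega
    rw [h]
    have := gQuot_succ κ hκ u
    push_cast at this ⊢
    linear_combination gQuot ν (n - u) * this
  rw [e1, e2, ← Finset.sum_add_distrib]
  refine Finset.sum_congr rfl fun u hu => ?_
  have hu' : u ≤ n := by simpa [Nat.lt_succ_iff] using hu
  have : ((n - u : ℕ) : ℝ) = (n:ℝ) - (u:ℝ) := by push_cast [Nat.cast_sub hu']; ring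
  rw [this]; ring

lemma beta_sum (ν κ : ℝ) (hν : 0 < ν) (hκ : 0 < κ) (n : ℕ) :
    ∑ u ∈ range (n + 1), gQuot ν (n - u) * gQuot κ u
      = Real.Gamma ν * Real.Gamma κ / Real.Gamma (ν + κ) * gQuot (ν + κ) n := by
  induction n with
  | zero =>
    simp [gQuot, Real.Gamma_one]
    field_simp [(Real.Gamma_pos_of_pos (by linarith : (0:ℝ) < ν + κ)).ne']
  | succ n ih =>
    have hs := beta_step ν κ hν hκ n
    rw [ih] at hs
    have hn1 : ((n:ℝ) + 1) ≠ 0 := by positivity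
    have key : ∑ u ∈ range (n + 2), gQuot ν (n + 1 - u) * gQuot κ u
        = ((n:ℝ) + ν + κ) * (Real.Gamma ν * Real.Gamma κ / Real.Gamma (ν + κ) * gQuot (ν + κ) n)
          / ((n:ℝ) + 1) := by
      rw [eq_div_iff hn1]
      linear_combination hs
    rw [show n + 1 + 1 = n + 2 from rfl, key]
    have h2 : (0:ℝ) < (n:ℝ) + (ν + κ) := by positivity
    have h3 : (0:ℝ) < (n:ℝ) + 1 := by positivity
    rw [gQuot, gQuot]
    push_cast
    rw [show (n:ℝ) + 1 + (ν + κ) = ((n:ℝ) + (ν + κ)) + 1 by ring, Real.Gamma_add_one h2.ne',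
      show (n:ℝ) + 1 + 1 = ((n:ℝ) + 1) + 1 by ring, Real.Gamma_add_one h3.ne']
    field_simp
    ring

lemma sum_Icc1' (a : ℤ) (n : ℕ) (F : ℤ → ℝ) :
    ∑ s ∈ Icc (a + 1) (a + n), F s = ∑ u ∈ range n, F (a + 1 + u) := by
  induction n with
  | zero =>
    rw [Finset.Icc_eq_empty (by omega)]
    simp
  | succ n ih =>
    have hins : Icc (a + 1) (a + (n + 1 : ℕ)) = insert (a + (n:ℤ) + 1) (Icc (a + 1) (a + n)) := by
      ext x; simp only [mem_Icc, mem_insert]; push_cast; omega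
    have hnot : a + (n:ℤ) + 1 ∉ Icc (a + 1) (a + n) := by simp
    rw [hins, Finset.sum_insert hnot, ih, Finset.sum_range_succ]
    have : a + 1 + (n : ℤ) = a + (n:ℤ) + 1 := by ring
    rw [this, add_comm]

lemma sum_Icc1 (a j : ℤ) (h : a ≤ j) (F : ℤ → ℝ) :
    ∑ s ∈ Icc (a + 1) j, F s = ∑ u ∈ range (j - a).toNat, F (a + 1 + u) := by
  obtain ⟨n, rfl⟩ : ∃ n : ℕ, j = a + n := ⟨(j - a).toNat, by omega⟩
  rw [show (a + (n:ℤ) - a).toNat = n by omega]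
  exact sum_Icc1' a n F

lemma sum_nabla (g : ℤ → ℝ) (a j : ℤ) (h : a ≤ j) :
    ∑ τ ∈ Icc (a + 1) j, nabla g τ = g j - g a := by
  rw [sum_Icc1 a j h]
  have : ∀ u ∈ range (j - a).toNat, nabla g (a + 1 + u) = g (a + (u + 1 : ℕ)) - g (a + u) := by
    intro u hu
    rw [nabla]
    congr 2 <;> push_cast <;> ring
  rw [Finset.sum_congr rfl this, Finset.sum_range_sub (fun u : ℕ => g (a + u))]
  have : a + ((j - a).toNat : ℤ) = j := by omega
  rw [this]
  simp

lemma fracSum_one_s11 (c : ℤ) (F : ℤ → ℝ) (t : ℤ) :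
    fracSum 1 c F t = ∑ τ ∈ Icc c t, F τ := by
  rw [fracSum]
  refine Finset.sum_congr rfl fun s hs => ?_
  have hs' : c ≤ s ∧ s ≤ t := by simpa [mem_Icc] using hs
  have h1 : (1:ℤ) ≤ t - s + 1 := by omega
  rw [show (1:ℝ) - 1 = 0 by ring, Rint_zero _ h1, Real.Gamma_one]
  simp

lemma sum_Icc0 (c j : ℤ) (h : c ≤ j + 1) (F : ℤ → ℝ) :
    ∑ s ∈ Icc c j, F s = ∑ u ∈ range (j + 1 - c).toNat, F (c + u) := by
  rw [show (Icc c j) = Icc ((c - 1) + 1) j by norm_num, sum_Icc1 (c - 1) j (by omega),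
    show (j - (c - 1)).toNat = (j + 1 - c).toNat by omega]
  refine Finset.sum_congr rfl fun u _ => ?_
  congr 1
  ring

lemma fracSum_comp_s11 (ν κ : ℝ) (hν : 0 < ν) (hκ : 0 < κ) (c : ℤ) (h : ℤ → ℝ) (t : ℤ) :
    fracSum ν c (fracSum κ c h) t = fracSum (ν + κ) c h t := by
  rcases lt_or_ge t c with hlt | hle
  · rw [fracSum, fracSum, Finset.Icc_eq_empty (by omega)]
    simp
  rw [fracSum, fracSum]
  have step1 : ∀ s ∈ Icc c t,
      risingFac ((t - s + 1 : ℤ) : ℝ) (ν - 1) / Real.Gamma ν * fracSum κ c h s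
        = ∑ σ ∈ Icc c t, (if σ ≤ s then
            risingFac ((t - s + 1 : ℤ) : ℝ) (ν - 1) / Real.Gamma ν *
              (risingFac ((s - σ + 1 : ℤ) : ℝ) (κ - 1) / Real.Gamma κ * h σ) else 0) := by
    intro s hs
    have hs' : c ≤ s ∧ s ≤ t := by simpa [mem_Icc] using hs
    have hset : Icc c s = (Icc c t).filter (fun σ => σ ≤ s) := by
      ext x; simp only [mem_Icc, mem_filter]; omega
    rw [fracSum, Finset.mul_sum, hset, Finset.sum_filter]
  rw [Finset.sum_congr rfl step1, Finset.sum_comm]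
  refine Finset.sum_congr rfl fun σ hσ => ?_
  have hσ' : c ≤ σ ∧ σ ≤ t := by simpa [mem_Icc] using hσ
  have hset2 : (Icc c t).filter (fun s => σ ≤ s) = Icc σ t := by
    ext x; simp only [mem_Icc, mem_filter]; omega
  rw [← Finset.sum_filter, hset2, sum_Icc0 σ t (by omega)]
  set n := (t + 1 - σ).toNat - 1 with hn
  have hrange : (t + 1 - σ).toNat = n + 1 := by omega
  have hts : t - σ = (n : ℤ) := by omega
  rw [hrange]
  have key : ∀ u ∈ range (n + 1),
      risingFac ((t - (σ + u) + 1 : ℤ) : ℝ) (ν - 1) / Real.Gamma ν *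
        (risingFac ((σ + u - σ + 1 : ℤ) : ℝ) (κ - 1) / Real.Gamma κ * h σ)
      = gQuot ν (n - u) * gQuot κ u * (h σ / (Real.Gamma ν * Real.Gamma κ)) := by
    intro u hu
    have hu' : u ≤ n := by simpa [Nat.lt_succ_iff] using hu
    have e1 : (t - (σ + u) + 1 : ℤ) = ((n - u : ℕ) : ℤ) + 1 := by omega
    have e2 : (σ + u - σ + 1 : ℤ) = (u : ℤ) + 1 := by omega
    rw [e1, e2, gQuot_eq ν (n - u), gQuot_eq κ u]
    push_cast
    ring
  rw [Finset.sum_congr rfl key, ← Finset.sum_mul, beta_sum ν κ hν hκ n]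
  have hΓν := (Real.Gamma_pos_of_pos hν).ne'
  have hΓκ := (Real.Gamma_pos_of_pos hκ).ne'
  have e3 : (t - σ + 1 : ℤ) = ((n : ℕ) : ℤ) + 1 := by omega
  rw [e3, show ((((n : ℕ) : ℤ) + 1 : ℤ) : ℝ) = ((n : ℕ) : ℝ) + 1 by push_cast; ring,
    ← gQuot_eq (ν + κ) n]
  field_simp

lemma taylor_s11 (q : ℕ) : ∀ (g : ℤ → ℝ) (a j : ℤ), a ≤ j →
    fracSum ((q:ℝ) + 1) (a + 1) (nabla^[q + 1] g) j
      = g j - g a - ∑ i ∈ range q,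
          risingFac ((j - a : ℤ) : ℝ) ((i:ℝ) + 1) / (Nat.factorial (i + 1) : ℝ)
            * nabla^[i + 1] g a := by
  induction q with
  | zero =>
    intro g a j hj
    simp only [Nat.cast_zero, zero_add, Finset.range_zero, Finset.sum_empty, sub_zero,
      Function.iterate_one]
    rw [fracSum_one_s11, sum_nabla g a j hj]
  | succ q ih =>
    intro g a j hj
    have hcast : ((q + 1 : ℕ) : ℝ) + 1 = 1 + ((q:ℝ) + 1) := by push_cast; ring
    rw [hcast, ← fracSum_comp_s11 1 ((q:ℝ) + 1) one_pos (by positivity) (a + 1) _ j, fracSum_one_s11]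
    have hit : nabla^[q + 1 + 1] g = nabla^[q + 1] (nabla g) := Function.iterate_succ_apply nabla (q+1) g
    have step : ∀ τ ∈ Icc (a + 1) j,
        fracSum ((q:ℝ) + 1) (a + 1) (nabla^[q + 1 + 1] g) τ
          = nabla g τ - nabla g a - ∑ i ∈ range q,
              risingFac ((τ - a : ℤ) : ℝ) ((i:ℝ) + 1) / (Nat.factorial (i + 1) : ℝ)
                * nabla^[i + 1] (nabla g) a := by
      intro τ hτ
      have hτ' : a + 1 ≤ τ ∧ τ ≤ j := by simpa [mem_Icc] using hτ
      rw [hit]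
      exact ih (nabla g) a τ (by omega)
    rw [Finset.sum_congr rfl step]
    simp only [Finset.sum_sub_distrib]
    rw [sum_nabla g a j hj, Finset.sum_const, Int.card_Icc]
    set N := (j - a).toNat with hN
    have hNe : (j + 1 - (a + 1)).toNat = N := by omega
    have hNZ : ((N : ℕ) : ℤ) = j - a := by omega
    have hNc : ((N : ℕ) : ℝ) = ((j - a : ℤ) : ℝ) := by exact_mod_cast hNZ
    rw [hNe]
    have inner : ∀ i ∈ range q,
        ∑ τ ∈ Icc (a + 1) j,
            risingFac ((τ - a : ℤ) : ℝ) ((i:ℝ) + 1) / (Nat.factorial (i + 1) : ℝ)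
              * nabla^[i + 1] (nabla g) a
          = risingFac ((j - a : ℤ) : ℝ) ((i:ℝ) + 2) / ((i:ℝ) + 2)
              * (nabla^[i + 2] g a / (Nat.factorial (i + 1) : ℝ)) := by
      intro i hi
      rw [sum_Icc1 a j hj, ← hN]
      have e1 : ∀ u ∈ range N,
          risingFac ((a + 1 + (u:ℤ) - a : ℤ) : ℝ) ((i:ℝ) + 1) / (Nat.factorial (i + 1) : ℝ)
              * nabla^[i + 1] (nabla g) a
            = risingFac ((u:ℝ) + 1) ((i:ℝ) + 1)
                * (nabla^[i + 2] g a / (Nat.factorial (i + 1) : ℝ)) := by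
        intro u hu
        have : (a + 1 + (u:ℤ) - a : ℤ) = (u : ℤ) + 1 := by ring
        rw [this, show nabla^[i + 2] g = nabla^[i + 1] (nabla g) from
          Function.iterate_succ_apply nabla (i+1) g]
        push_cast
        ring
      rw [Finset.sum_congr rfl e1, ← Finset.sum_mul,
        sum_R ((i:ℝ) + 1) (by linarith [Nat.cast_nonneg (α := ℝ) i]) N, hNc]
      ring_nf
    rw [Finset.sum_comm, Finset.sum_congr rfl inner, Finset.sum_range_succ']
    have e0 : risingFac ((j - a : ℤ) : ℝ) (((0:ℕ):ℝ) + 1) / (Nat.factorial (0 + 1) : ℝ)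
        * nabla^[0 + 1] g a = ((j - a : ℤ) : ℝ) * nabla g a := by
      rw [show (((0:ℕ):ℝ) + 1) = 1 by norm_num, Rint_one (j - a) (by omega)]
      norm_num
    rw [e0]
    have eterm : ∀ i ∈ range q,
        risingFac ((j - a : ℤ) : ℝ) (((i + 1 : ℕ):ℝ) + 1) / (Nat.factorial (i + 1 + 1) : ℝ)
            * nabla^[i + 1 + 1] g a
          = risingFac ((j - a : ℤ) : ℝ) ((i:ℝ) + 2) / ((i:ℝ) + 2)
              * (nabla^[i + 2] g a / (Nat.factorial (i + 1) : ℝ)) := by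
      intro i hi
      have hfac : (Nat.factorial (i + 2) : ℝ) = ((i:ℝ) + 2) * (Nat.factorial (i + 1) : ℝ) := by
        rw [Nat.factorial_succ]; push_cast; ring
      have hfp : (0:ℝ) < (Nat.factorial (i + 1) : ℝ) := by positivity
      rw [show i + 1 + 1 = i + 2 from rfl, hfac,
        show (((i + 1 : ℕ):ℝ) + 1) = ((i:ℝ) + 2) by push_cast; ring]
      field_simp
      try ring
    rw [Finset.sum_congr rfl eterm, nsmul_eq_mul, hNc]
    try ring

lemma key_id (μ : ℝ) (m p : ℕ) (a : ℤ) (hm : m = ⌈μ⌉₊) (hm2 : μ < m) (hp : (p:ℝ) < μ)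
    (f : ℤ → ℝ) (hf0 : ∀ k : ℕ, p + 1 ≤ k → k ≤ m - 1 → nabla^[k] f a = 0)
    (j : ℤ) (hj : a ≤ j) :
    fracSum (μ - p) (a + 1) (caputoNabla μ (a + 1) f) j
      = nabla^[p] f j - nabla^[p] f a := by
  have hmp : p + 1 ≤ m := by
    have : (p:ℝ) < (m:ℝ) := lt_trans hp hm2
    exact_mod_cast this
  set q := m - p - 1 with hqdef
  have hq : m = q + 1 + p := by omega
  rw [caputoNabla, ← hm,
    fracSum_comp_s11 (μ - p) ((m:ℝ) - μ) (by linarith) (by linarith) (a+1) _ j]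
  have hcast : μ - p + ((m:ℝ) - μ) = (q:ℝ) + 1 := by
    have : (m:ℝ) = (q:ℝ) + 1 + (p:ℝ) := by exact_mod_cast hq
    linarith
  rw [hcast, hq, Function.iterate_add_apply, taylor_s11 q (nabla^[p] f) a j hj]
  have hz : ∀ i ∈ range q,
      risingFac ((j - a : ℤ) : ℝ) ((i:ℝ) + 1) / (Nat.factorial (i + 1) : ℝ)
        * nabla^[i + 1] (nabla^[p] f) a = 0 := by
    intro i hi
    have hi' : i < q := by simpa using hi
    have : nabla^[i + 1] (nabla^[p] f) a = nabla^[i + 1 + p] f a :=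
      (congrFun (Function.iterate_add_apply nabla (i + 1) p f) a).symm
    rw [this, hf0 (i + 1 + p) (by omega) (by omega), mul_zero]
  rw [Finset.sum_eq_zero hz]
  ring

/-- Discrete nabla fractional Ostrowski inequality. -/
theorem discrete_nabla_fractional_ostrowski
    (μ : ℝ) (hμ : 0 < μ) (hμint : ∀ n : ℤ, μ ≠ n)
    (m : ℕ) (hm : m = ⌈μ⌉₊) (hm1 : (m : ℝ) - 1 < μ) (hm2 : μ < m)
    (p a : ℕ) (hp : (p : ℝ) < μ)
    (b : ℤ) (hb : (a : ℤ) + m < b)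
    (f : ℤ → ℝ)
    (hf0 : ∀ k, p + 1 ≤ k → k ≤ m - 1 → nabla^[k] f a = 0) :
    |(1 / ((b : ℝ) - a - m)) * ∑ j ∈ Finset.Icc ((a : ℤ) + m + 1) b, nabla^[p] f j -
        nabla^[p] f a| ≤
      (risingFac ((b : ℝ) - a) (μ - p + 1) - risingFac (m : ℝ) (μ - p + 1)) /
          (Real.Gamma (μ - p + 2) * ((b : ℝ) - a - m)) *
        sSup ((fun τ : ℤ => |caputoNabla μ ((a : ℤ) + 1) f τ|) ''
          Set.Icc ((a : ℤ) + 1) b) := by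
  set A : ℤ := (a : ℤ) with hA
  set g : ℤ → ℝ := caputoNabla μ (A + 1) f with hg
  set M : ℝ := sSup ((fun τ : ℤ => |g τ|) '' Set.Icc (A + 1) b) with hMdef
  set ν : ℝ := μ - p with hνdef
  have hν : 0 < ν := by simp only [hνdef]; linarith
  have hν1 : (-1:ℝ) < ν - 1 := by linarith
  have hΓν : (0:ℝ) < Real.Gamma ν := Real.Gamma_pos_of_pos hν
  have hmp : p + 1 ≤ m := by
    have : (p:ℝ) < (m:ℝ) := lt_trans hp hm2
    exact_mod_cast this
  set B : ℝ := (b : ℝ) - a - m with hB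
  have hbZ : ((a:ℕ):ℤ) + (m:ℕ) < b := hb
  have hbR : ((a:ℕ):ℝ) + (m:ℕ) < (b:ℝ) := by exact_mod_cast hbZ
  have hBpos : (0:ℝ) < B := by rw [hB]; linarith
  -- M facts
  have hbdd : BddAbove ((fun τ : ℤ => |g τ|) '' Set.Icc (A + 1) b) :=
    ((Set.finite_Icc _ _).image _).bddAbove
  have hMle : ∀ s : ℤ, A + 1 ≤ s → s ≤ b → |g s| ≤ M := by
    intro s h1 h2
    exact le_csSup hbdd ⟨s, Set.mem_Icc.2 ⟨h1, h2⟩, rfl⟩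
  have hM0 : 0 ≤ M :=
    le_trans (abs_nonneg _) (hMle (A + 1) le_rfl (by omega))
  -- pointwise bound
  have hjb : ∀ j : ℤ, A + 1 ≤ j → j ≤ b →
      |fracSum ν (A + 1) g j| ≤ risingFac ((j - A : ℤ) : ℝ) ν * (M / (ν * Real.Gamma ν)) := by
    intro j hj1 hj2
    have habs : |fracSum ν (A + 1) g j| ≤
        ∑ s ∈ Icc (A + 1) j, risingFac ((j - s + 1 : ℤ) : ℝ) (ν - 1) / Real.Gamma ν * M := by
      refine le_trans (Finset.abs_sum_le_sum_abs _ _) (Finset.sum_le_sum fun s hs => ?_)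
      have hs' : A + 1 ≤ s ∧ s ≤ j := by simpa [mem_Icc] using hs
      have hK : 0 ≤ risingFac ((j - s + 1 : ℤ) : ℝ) (ν - 1) / Real.Gamma ν := by
        refine div_nonneg (le_of_lt (Rpos (j - s + 1) (by omega) (ν - 1) ?_)) hΓν.le
        have : (1:ℝ) ≤ ((j - s + 1 : ℤ) : ℝ) := by exact_mod_cast (by omega : (1:ℤ) ≤ j - s + 1)
        linarith
      rw [abs_mul, abs_of_nonneg hK]
      exact mul_le_mul_of_nonneg_left (hMle s hs'.1 (le_trans hs'.2 hj2)) hK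
    refine le_trans habs (le_of_eq ?_)
    have e1 : ∀ s ∈ Icc (A + 1) j,
        risingFac ((j - s + 1 : ℤ) : ℝ) (ν - 1) / Real.Gamma ν * M
          = risingFac ((j - s + 1 : ℤ) : ℝ) (ν - 1) * (M / Real.Gamma ν) := by
      intro s _; ring
    rw [Finset.sum_congr rfl e1, ← Finset.sum_mul, sum_Icc1 A j (by omega)]
    set N := (j - A).toNat with hN
    have hNZ : (N : ℤ) = j - A := by omega
    have e2 : ∀ u ∈ range N,
        risingFac ((j - (A + 1 + u) + 1 : ℤ) : ℝ) (ν - 1)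
          = (fun v : ℕ => risingFac ((v:ℝ) + 1) (ν - 1)) (N - 1 - u) := by
      intro u hu
      have hu' : u < N := by simpa using hu
      have : (j - (A + 1 + u) + 1 : ℤ) = ((N - 1 - u : ℕ) : ℤ) + 1 := by omega
      rw [this]
      push_cast
      ring_nf
    rw [Finset.sum_congr rfl e2, Finset.sum_range_reflect (fun v : ℕ => risingFac ((v:ℝ) + 1) (ν - 1)) N, sum_R (ν - 1) hν1 N,
      show ν - 1 + 1 = ν by ring]
    have hNc : ((N : ℕ) : ℝ) = ((j - A : ℤ) : ℝ) := by exact_mod_cast hNZ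
    rw [hNc]
    field_simp
    try ring
  -- rearrange LHS
  have hcard : ((Icc (A + m + 1) b).card : ℝ) = B := by
    rw [Int.card_Icc, show (b + 1 - (A + m + 1)) = b - A - m by ring]
    have h2 : ((b - A - m).toNat : ℤ) = b - A - m := by omega
    have h3 : ((b - A - m).toNat : ℝ) = ((b - A - m : ℤ) : ℝ) := by exact_mod_cast h2
    rw [h3, hB, hA]
    push_cast
    ring
  have eL : (1 / B) * ∑ j ∈ Icc (A + m + 1) b, nabla^[p] f j - nabla^[p] f A
      = (1 / B) * ∑ j ∈ Icc (A + m + 1) b, (nabla^[p] f j - nabla^[p] f A) := by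
    rw [Finset.sum_sub_distrib, Finset.sum_const, nsmul_eq_mul, hcard]
    field_simp
  rw [eL, abs_mul, abs_of_nonneg (by positivity : (0:ℝ) ≤ 1 / B)]
  have eK : ∀ j ∈ Icc (A + m + 1) b,
      nabla^[p] f j - nabla^[p] f A = fracSum ν (A + 1) g j := by
    intro j hj
    have hj' : A + m + 1 ≤ j ∧ j ≤ b := by simpa [mem_Icc] using hj
    exact (key_id μ m p A hm hm2 hp f hf0 j (by omega)).symm
  rw [Finset.sum_congr rfl eK]
  -- sum the bounds
  have hsum : |∑ j ∈ Icc (A + m + 1) b, fracSum ν (A + 1) g j|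
      ≤ (∑ j ∈ Icc (A + m + 1) b, risingFac ((j - A : ℤ) : ℝ) ν) * (M / (ν * Real.Gamma ν)) := by
    rw [Finset.sum_mul]
    refine le_trans (Finset.abs_sum_le_sum_abs _ _) (Finset.sum_le_sum fun j hj => ?_)
    have hj' : A + m + 1 ≤ j ∧ j ≤ b := by simpa [mem_Icc] using hj
    exact hjb j (by omega) hj'.2
  -- closed form for the sum of rising factorials
  have hsplit : Icc (A + 1) b = Icc (A + 1) (A + m) ∪ Icc (A + m + 1) b := by
    ext x; simp only [mem_Icc, mem_union]; omega
  have hdisj : Disjoint (Icc (A + 1) (A + m)) (Icc (A + m + 1) b) := by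
    refine Finset.disjoint_left.2 fun x hx hx' => ?_
    simp only [mem_Icc] at hx hx'
    omega
  have hS1 : ∑ j ∈ Icc (A + 1) b, risingFac ((j - A : ℤ) : ℝ) ν
      = risingFac ((b : ℝ) - a) (ν + 1) / (ν + 1) := by
    rw [sum_Icc1 A b (by omega)]
    have e2 : ∀ u ∈ range (b - A).toNat,
        risingFac ((A + 1 + u - A : ℤ) : ℝ) ν = risingFac ((u:ℝ) + 1) ν := by
      intro u _
      have : (A + 1 + u - A : ℤ) = (u : ℤ) + 1 := by ring
      rw [this]; push_cast; ring_nf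
    rw [Finset.sum_congr rfl e2, sum_R ν (by linarith) _]
    have : (((b - A).toNat : ℕ) : ℝ) = (b : ℝ) - a := by
      have h2 : (((b - A).toNat : ℕ) : ℤ) = b - A := by omega
      have := congrArg (fun z : ℤ => (z : ℝ)) h2
      push_cast at this
      simpa [hA] using this
    rw [this]
  have hS2 : ∑ j ∈ Icc (A + 1) (A + m), risingFac ((j - A : ℤ) : ℝ) ν
      = risingFac ((m : ℕ) : ℝ) (ν + 1) / (ν + 1) := by
    rw [sum_Icc1 A (A + m) (by omega)]
    have hNm : (A + m - A).toNat = m := by omega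
    rw [hNm]
    have e2 : ∀ u ∈ range m,
        risingFac ((A + 1 + u - A : ℤ) : ℝ) ν = risingFac ((u:ℝ) + 1) ν := by
      intro u _
      have : (A + 1 + u - A : ℤ) = (u : ℤ) + 1 := by ring
      rw [this]; push_cast; ring_nf
    rw [Finset.sum_congr rfl e2, sum_R ν (by linarith) m]
  have hSsum : ∑ j ∈ Icc (A + m + 1) b, risingFac ((j - A : ℤ) : ℝ) ν
      = risingFac ((b : ℝ) - a) (ν + 1) / (ν + 1) - risingFac ((m : ℕ) : ℝ) (ν + 1) / (ν + 1) := by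
    have := Finset.sum_union (f := fun j : ℤ => risingFac ((j - A : ℤ) : ℝ) ν) hdisj
    rw [← hsplit] at this
    rw [← hS1, this, hS2]
    ring
  -- Gamma identity
  have hΓ2 : Real.Gamma (μ - p + 2) = (ν + 1) * ν * Real.Gamma ν := by
    have e : μ - p + 2 = (ν + 1) + 1 := by rw [hνdef]; ring
    rw [e, Real.Gamma_add_one (by linarith : ν + 1 ≠ 0),
      show ν + 1 = ν + 1 from rfl]
    rw [show Real.Gamma (ν + 1) = ν * Real.Gamma ν from Real.Gamma_add_one hν.ne']
    ring
  -- final chain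
  have final : (1 / B) * ((risingFac ((b : ℝ) - a) (ν + 1) / (ν + 1)
        - risingFac ((m : ℕ) : ℝ) (ν + 1) / (ν + 1)) * (M / (ν * Real.Gamma ν)))
      = (risingFac ((b : ℝ) - a) (μ - p + 1) - risingFac ((m : ℕ) : ℝ) (μ - p + 1)) /
          (Real.Gamma (μ - p + 2) * B) * M := by
    rw [hΓ2, show μ - p + 1 = ν + 1 by rw [hνdef]]
    have hne1 : ν + 1 ≠ 0 := by linarith
    field_simp
    try ring_nf
    try tauto
  calc (1 / B) * |∑ j ∈ Icc (A + m + 1) b, fracSum ν (A + 1) g j|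
      ≤ (1 / B) * ((∑ j ∈ Icc (A + m + 1) b, risingFac ((j - A : ℤ) : ℝ) ν)
          * (M / (ν * Real.Gamma ν))) := by
        exact mul_le_mul_of_nonneg_left hsum (by positivity)
    _ = (risingFac ((b : ℝ) - a) (μ - p + 1) - risingFac ((m : ℕ) : ℝ) (μ - p + 1)) /
          (Real.Gamma (μ - p + 2) * B) * M := by
        rw [hSsum]
        rw [show risingFac ((b : ℝ) - a) (ν + 1) / (ν + 1)
            - risingFac ((m : ℕ) : ℝ) (ν + 1) / (ν + 1)
            = (risingFac ((b : ℝ) - a) (ν + 1) / (ν + 1)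
              - risingFac ((m : ℕ) : ℝ) (ν + 1) / (ν + 1)) from rfl]
        exact final
end
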